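/- arXiv:1702.02998 — 6 statements merged into one kernel-verified Lean document; each statement's English description precedes it below -/
import Mathlib

section
/- The sylvester monoid satisfies the identity xyxy = yxxy; that is, for all words x, y over the positive integers, the words xyxy and yxxy are congruent under the sylvester congruence. -/
/-- Binary trees labelled by elements of `α`. -/
inductive BT (α : Type) : Type
  | leaf : BT α
  | node : BT α → α → BT α → BT α
  deriving DecidableEq

namespace BT

variable {α β : Type}

/-- Map a function over the labels of a tree. -/
def map (f : α → β) : BT α → BT β
  | leaf => leaf
  | node l a r => node (map f l) (f a) (map f r)

/-- The shape of a labelled tree: its underlying unlabelled tree. -/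
def shape : BT α → BT Unit := map (fun _ => ())

/-- The content of a tree: the multiset of its labels. -/
def content : BT α → Multiset α
  | leaf => 0
  | node l a r => a ::ₘ (content l + content r)

/-- Infix (in-order) reading of a labelled tree. -/
def infixRead : BT α → List α
  | leaf => []
  | node l a r => infixRead l ++ a :: infixRead r

/-- Left-to-right postfix (post-order) reading of a labelled tree. -/
def postfixRead : BT α → List α
  | leaf => []
  | node l a r => postfixRead l ++ postfixRead r ++ [a]

/-- Right strict binary search tree: each label is ≥ everything in its left
subtree and < everything in its right subtree. -/
def IsRBST : BT ℕ+ → Prop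
  | leaf => True
  | node l a r =>
      (∀ x ∈ content l, x ≤ a) ∧ (∀ x ∈ content r, a < x) ∧ IsRBST l ∧ IsRBST r

/-- Left strict binary search tree: each label is > everything in its left
subtree and ≤ everything in its right subtree. -/
def IsLBST : BT ℕ+ → Prop
  | leaf => True
  | node l a r =>
      (∀ x ∈ content l, x < a) ∧ (∀ x ∈ content r, a ≤ x) ∧ IsLBST l ∧ IsLBST r

/-- Right strict leaf insertion: `a ≤` root label goes left, else right. -/
def rIns (a : ℕ+) : BT ℕ+ → BT ℕ+
  | leaf => node leaf a leaf
  | node l x r => if a ≤ x then node (rIns a l) x r else node l x (rIns a r)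

/-- Left strict leaf insertion: `a ≥` root label goes right, else left. -/
def lIns (a : ℕ+) : BT ℕ+ → BT ℕ+
  | leaf => node leaf a leaf
  | node l x r => if x ≤ a then node l x (lIns a r) else node (lIns a l) x r

end BT

open BT

/-- The sylvester P-symbol: insert the letters of `u` from right to left via
right strict leaf insertion. -/
def Psylv (u : List ℕ+) : BT ℕ+ := u.foldr rIns .leaf

/-- Left strict insertion of a word, processing letters left to right. -/
def Pltree (u : List ℕ+) : BT ℕ+ := u.foldl (fun t a => lIns a t) .leaf

/-- Auxiliary fuelled construction of the decreasing tree of a word: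
the maximum letter is the root, and the subtrees are built recursively from
the factors to its left and right. -/
def decAux : ℕ → List ℕ+ → BT ℕ+
  | 0, _ => .leaf
  | _ + 1, [] => .leaf
  | n + 1, (a :: l) =>
      let m := (a :: l).foldr max a
      let i := (a :: l).idxOf m
      .node (decAux n ((a :: l).take i)) m (decAux n ((a :: l).drop (i + 1)))

/-- The decreasing tree of a word (with distinct letters). -/
def decTree (u : List ℕ+) : BT ℕ+ := decAux u.length u

/-- Auxiliary fuelled construction of the increasing tree of a word. -/
def incAux : ℕ → List ℕ+ → BT ℕ+
  | 0, _ => .leaf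
  | _ + 1, [] => .leaf
  | n + 1, (a :: l) =>
      let m := (a :: l).foldr min a
      let i := (a :: l).idxOf m
      .node (incAux n ((a :: l).take i)) m (incAux n ((a :: l).drop (i + 1)))

/-- The increasing tree of a word (with distinct letters). -/
def incTree (u : List ℕ+) : BT ℕ+ := incAux u.length u

/-- The standardization of a word: the `j`-th letter `a` is relabelled by the
number of letters smaller than `a` plus the number of occurrences of `a` up to
and including position `j`. -/
def stdWord (u : List ℕ+) : List ℕ+ :=
  u.mapIdx (fun j a =>
    (u.countP (fun b => decide (b < a)) +
       (u.take (j + 1)).countP (fun b => decide (b = a))).toPNat')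

/-- The inverse of a standard word, viewed as a permutation in one-line
notation: the `j`-th letter is the position of `j` in `w`. -/
def invWord (w : List ℕ+) : List ℕ+ :=
  (List.range w.length).map (fun j => (w.idxOf (j + 1).toPNat' + 1).toPNat')

/-- A standard word: a permutation of `1, …, k` in one-line notation. -/
def IsStandard (w : List ℕ+) : Prop :=
  w.Perm ((List.range w.length).map (fun j => (j + 1).toPNat'))

/-- The quasi-Kashiwara raising operator `ė i` is defined on `u`: `u` has no
letter `i+1` to the left of a letter `i`, and `u` contains a letter `i+1`. -/
def qeDef (i : ℕ+) (u : List ℕ+) : Prop :=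
  ¬ List.Sublist [i + 1, i] u ∧ (i + 1) ∈ u

/-- The quasi-Kashiwara lowering operator `ḟ i` is defined on `u`: `u` has no
letter `i+1` to the left of a letter `i`, and `u` contains a letter `i`. -/
def qfDef (i : ℕ+) (u : List ℕ+) : Prop :=
  ¬ List.Sublist [i + 1, i] u ∧ i ∈ u

/-- The action of `ė i`: replace the leftmost letter `i+1` by `i`. -/
def qe (i : ℕ+) (u : List ℕ+) : List ℕ+ := u.set (u.idxOf (i + 1)) i

/-- The action of `ḟ i`: replace the rightmost letter `i` by `i+1`. -/
def qf (i : ℕ+) (u : List ℕ+) : List ℕ+ :=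
  (u.reverse.set (u.reverse.idxOf i) (i + 1)).reverse

/-- The defining relations of the sylvester monoid:
`(c a v b, a c v b)` for letters `a ≤ b < c` and words `v`. -/
def sylvRel (u v : FreeMonoid ℕ+) : Prop :=
  ∃ (a b c : ℕ+) (w : FreeMonoid ℕ+), a ≤ b ∧ b < c ∧
    u = FreeMonoid.ofList [c, a] * w * FreeMonoid.of b ∧
    v = FreeMonoid.ofList [a, c] * w * FreeMonoid.of b

/-- The sylvester congruence: the congruence generated by `sylvRel`. -/
def sylvCon : Con (FreeMonoid ℕ+) := conGen sylvRel


open FreeMonoid in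
lemma sylvCon_base {u v : FreeMonoid ℕ+} (h : sylvRel u v) : sylvCon u v :=
  ConGen.Rel.of _ _ h

open FreeMonoid in
lemma sylvCon_swap (a c : ℕ+) (s : List ℕ+) (ha : a ∈ s) (hc : c ∈ s) :
    sylvCon (ofList ([a, c] ++ s)) (ofList ([c, a] ++ s)) := by
  rcases lt_trichotomy a c with hlt | heq | hgt
  · obtain ⟨w, t, rfl⟩ := List.append_of_mem ha
    have h1 : sylvRel (ofList ([c, a] ++ w ++ [a])) (ofList ([a, c] ++ w ++ [a])) :=
      ⟨a, a, c, ofList w, le_refl a, hlt, by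
        simp [FreeMonoid.ofList_append, mul_assoc], by simp [FreeMonoid.ofList_append, mul_assoc]⟩
    have h2 := sylvCon.mul (sylvCon_base h1) (sylvCon.refl (ofList t))
    have e1 : ofList ([c, a] ++ w ++ [a]) * ofList t = ofList ([c, a] ++ (w ++ a :: t)) := by
      rw [← FreeMonoid.ofList_append]; simp
    have e2 : ofList ([a, c] ++ w ++ [a]) * ofList t = ofList ([a, c] ++ (w ++ a :: t)) := by
      rw [← FreeMonoid.ofList_append]; simp
    rw [e1, e2] at h2
    exact sylvCon.symm h2
  · subst heq; exact sylvCon.refl _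
  · obtain ⟨w, t, rfl⟩ := List.append_of_mem hc
    have h1 : sylvRel (ofList ([a, c] ++ w ++ [c])) (ofList ([c, a] ++ w ++ [c])) :=
      ⟨c, c, a, ofList w, le_refl c, hgt, by
        simp [FreeMonoid.ofList_append, mul_assoc], by simp [FreeMonoid.ofList_append, mul_assoc]⟩
    have h2 := sylvCon.mul (sylvCon_base h1) (sylvCon.refl (ofList t))
    have e1 : ofList ([a, c] ++ w ++ [c]) * ofList t = ofList ([a, c] ++ (w ++ c :: t)) := by
      rw [← FreeMonoid.ofList_append]; simp
    have e2 : ofList ([c, a] ++ w ++ [c]) * ofList t = ofList ([c, a] ++ (w ++ c :: t)) := by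
      rw [← FreeMonoid.ofList_append]; simp
    rw [e1, e2] at h2
    exact h2

open FreeMonoid in
lemma sylvCon_letter_block (a : ℕ+) (q s : List ℕ+) (ha : a ∈ s)
    (hq : ∀ c ∈ q, c ∈ s) :
    sylvCon (ofList (a :: (q ++ s))) (ofList (q ++ a :: s)) := by
  induction q generalizing s with
  | nil => exact sylvCon.refl _
  | cons b q' ih =>
    have step1 : sylvCon (ofList ([a, b] ++ (q' ++ s))) (ofList ([b, a] ++ (q' ++ s))) :=
      sylvCon_swap a b (q' ++ s) (List.mem_append_right _ ha)
        (List.mem_append_right _ (hq b (List.mem_cons_self)))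
    have step2 : sylvCon (ofList (a :: (q' ++ s))) (ofList (q' ++ a :: s)) :=
      ih s ha (fun c hc => hq c (List.mem_cons_of_mem _ hc))
    have step3 := sylvCon.mul (sylvCon.refl (ofList [b])) step2
    rw [← FreeMonoid.ofList_append, ← FreeMonoid.ofList_append] at step3
    refine sylvCon.trans ?_ step3
    convert step1 using 2 <;> simp

open FreeMonoid in
lemma sylvCon_block (p q s : List ℕ+) (hp : ∀ c ∈ p, c ∈ s) (hq : ∀ c ∈ q, c ∈ s) :
    sylvCon (ofList (p ++ q ++ s)) (ofList (q ++ p ++ s)) := by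
  induction p generalizing s with
  | nil => simp; exact sylvCon.refl _
  | cons a p' ih =>
    have step1 : sylvCon (ofList (p' ++ q ++ s)) (ofList (q ++ p' ++ s)) :=
      ih s (fun c hc => hp c (List.mem_cons_of_mem _ hc)) hq
    have step2 := sylvCon.mul (sylvCon.refl (ofList [a])) step1
    rw [← FreeMonoid.ofList_append, ← FreeMonoid.ofList_append] at step2
    have step3 : sylvCon (ofList (a :: (q ++ (p' ++ s)))) (ofList (q ++ a :: (p' ++ s))) :=
      sylvCon_letter_block a q (p' ++ s)
        (List.mem_append_right _ (hp a (List.mem_cons_self)))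
        (fun c hc => List.mem_append_right _ (hq c hc))
    have step2' : sylvCon (ofList (a :: p' ++ q ++ s)) (ofList (a :: (q ++ (p' ++ s)))) := by
      convert step2 using 2 <;> simp
    refine sylvCon.trans (sylvCon.trans step2' step3) ?_
    have : q ++ a :: (p' ++ s) = (q ++ a :: p') ++ s := by simp
    rw [this]
    exact sylvCon.refl _

/-- The sylvester monoid satisfies the identity `xyxy = yxxy`. -/
theorem sylv_identity (x y : FreeMonoid ℕ+) :
    sylvCon (x * y * x * y) (y * x * x * y) := by
  have key := sylvCon_block (FreeMonoid.toList x) (FreeMonoid.toList y)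
    (FreeMonoid.toList x ++ FreeMonoid.toList y)
    (fun c hc => List.mem_append_left _ hc) (fun c hc => List.mem_append_right _ hc)
  have e1 : FreeMonoid.ofList (FreeMonoid.toList x ++ FreeMonoid.toList y ++
      (FreeMonoid.toList x ++ FreeMonoid.toList y)) = x * y * x * y := by
    simp [FreeMonoid.ofList_append, mul_assoc]
  have e2 : FreeMonoid.ofList (FreeMonoid.toList y ++ FreeMonoid.toList x ++
      (FreeMonoid.toList x ++ FreeMonoid.toList y)) = y * x * x * y := by
    simp [FreeMonoid.ofList_append, mul_assoc]
  rw [e1, e2] at key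
  exact key
end

section
/- The Baxter monoid satisfies the identity xyxyxy = xyyxxy; that is, for all words x, y over the positive integers, the words xyxyxy and xyyxxy are congruent under the Baxter congruence. -/
open BT

/-- The defining relations of the Baxter monoid. -/
def baxtRel (x y : FreeMonoid ℕ+) : Prop :=
  (∃ (a b c d : ℕ+) (u v : FreeMonoid ℕ+), a ≤ b ∧ b < c ∧ c ≤ d ∧
      x = FreeMonoid.of c * u * FreeMonoid.ofList [d, a] * v * FreeMonoid.of b ∧
      y = FreeMonoid.of c * u * FreeMonoid.ofList [a, d] * v * FreeMonoid.of b) ∨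
  (∃ (a b c d : ℕ+) (u v : FreeMonoid ℕ+), a < b ∧ b ≤ c ∧ c < d ∧
      x = FreeMonoid.of b * u * FreeMonoid.ofList [d, a] * v * FreeMonoid.of c ∧
      y = FreeMonoid.of b * u * FreeMonoid.ofList [a, d] * v * FreeMonoid.of c)

/-- The Baxter congruence: the congruence generated by `baxtRel`. -/
def baxtCon : Con (FreeMonoid ℕ+) := conGen baxtRel


section BaxtAux
open FreeMonoid

private lemma swap_core {a d : ℕ+} (h : a < d) (w1 w2 : List ℕ+)
    (hd : d ∈ w1) (ha : a ∈ w2) :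
    baxtCon (FreeMonoid.ofList (w1 ++ d :: a :: w2))
      (FreeMonoid.ofList (w1 ++ a :: d :: w2)) := by
  obtain ⟨u1, u2, rfl⟩ := List.append_of_mem hd
  obtain ⟨v1, v2, rfl⟩ := List.append_of_mem ha
  have hrel : baxtRel
      (FreeMonoid.of d * FreeMonoid.ofList u2 * FreeMonoid.ofList [d, a] *
        FreeMonoid.ofList v1 * FreeMonoid.of a)
      (FreeMonoid.of d * FreeMonoid.ofList u2 * FreeMonoid.ofList [a, d] *
        FreeMonoid.ofList v1 * FreeMonoid.of a) :=
    Or.inl ⟨a, a, d, d, FreeMonoid.ofList u2, FreeMonoid.ofList v1,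
      le_refl a, h, le_refl d, rfl, rfl⟩
  have h1 : baxtCon
      (FreeMonoid.of d * FreeMonoid.ofList u2 * FreeMonoid.ofList [d, a] *
        FreeMonoid.ofList v1 * FreeMonoid.of a)
      (FreeMonoid.of d * FreeMonoid.ofList u2 * FreeMonoid.ofList [a, d] *
        FreeMonoid.ofList v1 * FreeMonoid.of a) := ConGen.Rel.of _ _ hrel
  have h2 := baxtCon.mul (baxtCon.mul (baxtCon.refl (FreeMonoid.ofList u1)) h1)
    (baxtCon.refl (FreeMonoid.ofList v2))
  have e1 : FreeMonoid.ofList ((u1 ++ d :: u2) ++ d :: a :: (v1 ++ a :: v2)) =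
      FreeMonoid.ofList u1 *
        (FreeMonoid.of d * FreeMonoid.ofList u2 * FreeMonoid.ofList [d, a] *
          FreeMonoid.ofList v1 * FreeMonoid.of a) * FreeMonoid.ofList v2 := by
    show FreeMonoid.ofList _ = FreeMonoid.ofList _
    congr 1
    simp
  have e2 : FreeMonoid.ofList ((u1 ++ d :: u2) ++ a :: d :: (v1 ++ a :: v2)) =
      FreeMonoid.ofList u1 *
        (FreeMonoid.of d * FreeMonoid.ofList u2 * FreeMonoid.ofList [a, d] *
          FreeMonoid.ofList v1 * FreeMonoid.of a) * FreeMonoid.ofList v2 := by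
    show FreeMonoid.ofList _ = FreeMonoid.ofList _
    congr 1
    simp
  rw [e1, e2]
  exact h2

private lemma swap_adj (p q : ℕ+) (w1 w2 : List ℕ+)
    (hp1 : p ∈ w1) (hq1 : q ∈ w1) (hp2 : p ∈ w2) (hq2 : q ∈ w2) :
    baxtCon (FreeMonoid.ofList (w1 ++ p :: q :: w2))
      (FreeMonoid.ofList (w1 ++ q :: p :: w2)) := by
  rcases lt_trichotomy p q with h | h | h
  · exact (swap_core h w1 w2 hq1 hp2).symm
  · subst h; exact baxtCon.refl _
  · exact swap_core h w1 w2 hp1 hq2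

private lemma move_letter (q : ℕ+) (s : List ℕ+) :
    ∀ w1 w2 : List ℕ+, q ∈ w1 → q ∈ w2 → (∀ r ∈ s, r ∈ w1 ∧ r ∈ w2) →
    baxtCon (FreeMonoid.ofList (w1 ++ s ++ q :: w2))
      (FreeMonoid.ofList (w1 ++ q :: (s ++ w2))) := by
  induction s with
  | nil =>
    intro w1 w2 _ _ _
    simp only [List.append_nil, List.nil_append]
    exact baxtCon.refl _
  | cons p s' ih =>
    intro w1 w2 hq1 hq2 hs
    have hp : p ∈ w1 ∧ p ∈ w2 := hs p (List.mem_cons_self (a := p) (l := s'))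
    have step1 : baxtCon (FreeMonoid.ofList ((w1 ++ [p]) ++ s' ++ q :: w2))
        (FreeMonoid.ofList ((w1 ++ [p]) ++ q :: (s' ++ w2))) :=
      ih (w1 ++ [p]) w2 (List.mem_append_left _ hq1) hq2
        (fun r hr => ⟨List.mem_append_left _ (hs r (List.mem_cons_of_mem p hr)).1,
          (hs r (List.mem_cons_of_mem p hr)).2⟩)
    have step2 : baxtCon (FreeMonoid.ofList (w1 ++ p :: q :: (s' ++ w2)))
        (FreeMonoid.ofList (w1 ++ q :: p :: (s' ++ w2))) :=
      swap_adj p q w1 (s' ++ w2) hp.1 hq1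
        (List.mem_append_right _ hp.2) (List.mem_append_right _ hq2)
    have e1 : (w1 ++ p :: s') ++ q :: w2 = (w1 ++ [p]) ++ s' ++ q :: w2 := by simp
    have e2 : (w1 ++ [p]) ++ q :: (s' ++ w2) = w1 ++ p :: q :: (s' ++ w2) := by simp
    have e3 : w1 ++ q :: p :: (s' ++ w2) = w1 ++ q :: ((p :: s') ++ w2) := by simp
    rw [e1, ← e3]
    exact (step1.trans (e2 ▸ step2 : _))

private lemma swap_blocks (t : List ℕ+) :
    ∀ (w1 w2 s : List ℕ+), (∀ r ∈ s ++ t, r ∈ w1 ∧ r ∈ w2) →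
    baxtCon (FreeMonoid.ofList (w1 ++ s ++ t ++ w2))
      (FreeMonoid.ofList (w1 ++ t ++ s ++ w2)) := by
  induction t with
  | nil => intro w1 w2 s _; simp only [List.append_nil]; exact baxtCon.refl _
  | cons q t' ih =>
    intro w1 w2 s h
    have hq : q ∈ w1 ∧ q ∈ w2 :=
      h q (List.mem_append_right _ (List.mem_cons_self (a := q) (l := t')))
    have hs : ∀ r ∈ s, r ∈ w1 ∧ r ∈ w2 := fun r hr => h r (List.mem_append_left _ hr)
    have step1 : baxtCon (FreeMonoid.ofList (w1 ++ s ++ q :: (t' ++ w2)))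
        (FreeMonoid.ofList (w1 ++ q :: (s ++ (t' ++ w2)))) :=
      move_letter q s w1 (t' ++ w2) hq.1 (List.mem_append_right _ hq.2)
        (fun r hr => ⟨(hs r hr).1, List.mem_append_right _ (hs r hr).2⟩)
    have step2 : baxtCon (FreeMonoid.ofList ((w1 ++ [q]) ++ s ++ t' ++ w2))
        (FreeMonoid.ofList ((w1 ++ [q]) ++ t' ++ s ++ w2)) := by
      refine ih (w1 ++ [q]) w2 s (fun r hr => ?_)
      have : r ∈ s ++ q :: t' := by
        rcases List.mem_append.mp hr with h1 | h1
        · exact List.mem_append_left _ h1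
        · exact List.mem_append_right _ (List.mem_cons_of_mem q h1)
      exact ⟨List.mem_append_left _ (h r this).1, (h r this).2⟩
    have e1 : w1 ++ s ++ (q :: t') ++ w2 = w1 ++ s ++ q :: (t' ++ w2) := by simp
    have e2 : w1 ++ q :: (s ++ (t' ++ w2)) = (w1 ++ [q]) ++ s ++ t' ++ w2 := by simp
    have e3 : (w1 ++ [q]) ++ t' ++ s ++ w2 = w1 ++ (q :: t') ++ s ++ w2 := by simp
    rw [e1, ← e3]
    exact step1.trans (by rw [e2]; exact step2)

end BaxtAux

/-- The Baxter monoid satisfies the identity `xyxyxy = xyyxxy`. -/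
theorem baxt_identity (x y : FreeMonoid ℕ+) :
    baxtCon (x * y * x * y * x * y) (x * y * y * x * x * y) := by
  have lx := x.toList
  have h := swap_blocks y.toList (x.toList ++ y.toList) (x.toList ++ y.toList) x.toList
    (fun r hr => by
      rcases List.mem_append.mp hr with h1 | h1
      · exact ⟨List.mem_append_left _ h1, List.mem_append_left _ h1⟩
      · exact ⟨List.mem_append_right _ h1, List.mem_append_right _ h1⟩)
  have e1 : x * y * x * y * x * y =
      FreeMonoid.ofList ((x.toList ++ y.toList) ++ x.toList ++ y.toList ++
        (x.toList ++ y.toList)) := by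
    show FreeMonoid.ofList _ = FreeMonoid.ofList _
    congr 1
    simp
  have e2 : x * y * y * x * x * y =
      FreeMonoid.ofList ((x.toList ++ y.toList) ++ y.toList ++ x.toList ++
        (x.toList ++ y.toList)) := by
    show FreeMonoid.ofList _ = FreeMonoid.ofList _
    congr 1
    simp
  rw [e1, e2]
  exact h
end

section
/- Two right strict binary search trees having the same shape (underlying unlabelled binary tree) and the same content (multiset of labels) are identical. -/
open BT

namespace BT

lemma infixRead_map (f : α → β) (t : BT α) :
    (t.map f).infixRead = t.infixRead.map f := by
  induction t with
  | leaf => rfl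
  | node l a r ihl ihr => simp [map, infixRead, ihl, ihr]

lemma content_eq_coe (t : BT ℕ+) : content t = ↑t.infixRead := by
  induction t with
  | leaf => rfl
  | node l a r ihl ihr =>
    simp only [content, infixRead, ihl, ihr, ← Multiset.cons_coe,
      ← Multiset.coe_add, Multiset.add_cons]

lemma mem_infixRead_of_mem_content {x : ℕ+} {t : BT ℕ+}
    (h : x ∈ content t) : x ∈ t.infixRead := by
  rwa [content_eq_coe, Multiset.mem_coe] at h

lemma sorted_infixRead {t : BT ℕ+} (h : IsRBST t) :
    t.infixRead.Pairwise (· ≤ ·) := by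
  induction t with
  | leaf => simp [infixRead]
  | node l a r ihl ihr =>
    obtain ⟨h1, h2, h3, h4⟩ := h
    have hl := ihl h3
    have hr := ihr h4
    simp only [infixRead, List.pairwise_append, List.pairwise_cons] at *
    have hle : ∀ x ∈ l.infixRead, x ≤ a := fun x hx =>
      h1 x (by rwa [content_eq_coe, Multiset.mem_coe])
    have hlt : ∀ y ∈ r.infixRead, a < y := fun y hy =>
      h2 y (by rwa [content_eq_coe, Multiset.mem_coe])
    refine ⟨hl, ⟨fun y hy => le_of_lt (hlt y hy), hr⟩, ?_⟩
    intro x hx y hy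
    rcases List.mem_cons.mp hy with rfl | hy'
    · exact hle x hx
    · exact (hle x hx).trans (le_of_lt (hlt y hy'))

lemma infixRead_length_shape (t : BT α) :
    t.infixRead.length = t.shape.infixRead.length := by
  rw [shape, infixRead_map, List.length_map]

lemma eq_of_shape_eq_infix_eq : ∀ (t t' : BT α), shape t = shape t' →
    infixRead t = infixRead t' → t = t' := by
  intro t
  induction t with
  | leaf =>
    intro t' hs _
    cases t' with
    | leaf => rfl
    | node l' a' r' => simp [shape, map] at hs
  | node l a r ihl ihr =>
    intro t' hs hi
    cases t' with
    | leaf => simp [shape, map] at hs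
    | node l' a' r' =>
      simp only [shape, map, node.injEq] at hs
      obtain ⟨hsl, -, hsr⟩ := hs
      simp only [infixRead] at hi
      have hlen : l.infixRead.length = l'.infixRead.length := by
        rw [infixRead_length_shape l, infixRead_length_shape l',
          show l.shape = l'.shape from hsl]
      obtain ⟨h1, h2⟩ := List.append_inj hi hlen
      injection h2 with h2a h2b
      rw [ihl l' hsl h1, h2a, ihr r' hsr h2b]

end BT

/-- Two right strict binary search trees with the same shape and the same
content are identical. -/
theorem rbst_eq_of_shape_eq_content_eq (T T' : BT ℕ+)
    (hT : IsRBST T) (hT' : IsRBST T')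
    (hshape : shape T = shape T') (hcontent : content T = content T') :
    T = T' := by
  apply eq_of_shape_eq_infix_eq T T' hshape
  apply List.Perm.eq_of_pairwise' (sorted_infixRead hT) (sorted_infixRead hT')
  rw [content_eq_coe, content_eq_coe] at hcontent
  exact Multiset.coe_eq_coe.mp hcontent
end

section
/- Two words u and v over the positive integers have the same right strict binary search tree under insertion if and only if they have the same weight (content) and the decreasing trees of the inverses of their standardizations have the same shape. -/
open BT

namespace BT

variable {α β : Type}

lemma shape_map (f : α → β) (t : BT α) : shape (map f t) = shape t := by
  induction t with
  | leaf => rfl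
  | node l a r ihl ihr => simp [shape, map] at *; exact ⟨ihl, ihr⟩

lemma map_congr {f g : α → β} (t : BT α) (h : ∀ x ∈ content t, f x = g x) :
    map f t = map g t := by
  induction t with
  | leaf => rfl
  | node l a r ihl ihr =>
    simp only [content, map]
    rw [ihl fun x hx => h x (by simp [content, hx]),
        ihr fun x hx => h x (by simp [content, hx]), h a (by simp [content])]

lemma map_map (f : α → β) (g : β → γ) (t : BT α) :
    map g (map f t) = map (g ∘ f) t := by
  induction t <;> simp [map, *]

def size : BT α → ℕ
  | leaf => 0
  | node l _ r => size l + size r + 1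

lemma size_map (f : α → β) (t : BT α) : size (map f t) = size t := by
  induction t <;> simp [map, size, *]

lemma length_infixRead (t : BT α) : (infixRead t).length = size t := by
  induction t <;> simp [infixRead, size, *] <;> omega

lemma infixRead_coe (t : BT α) : (↑(infixRead t) : Multiset α) = content t := by
  induction t with
  | leaf => rfl
  | node l a r ihl ihr =>
    simp only [infixRead, content]
    rw [← ihl, ← ihr, ← Multiset.coe_add, ← Multiset.cons_coe]
    exact Multiset.add_cons _ _ _


lemma content_rIns (a : ℕ+) (t : BT ℕ+) : content (rIns a t) = a ::ₘ content t := by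
  induction t with
  | leaf => rfl
  | node l x r ihl ihr =>
    by_cases h : a ≤ x
    · simp only [rIns, if_pos h, content, ihl]
      rw [Multiset.cons_swap]; simp [Multiset.cons_add]
    · simp only [rIns, if_neg h, content, ihr]
      rw [Multiset.cons_swap]; simp [Multiset.add_cons]

lemma isRBST_rIns (a : ℕ+) (t : BT ℕ+) (ht : IsRBST t) : IsRBST (rIns a t) := by
  induction t with
  | leaf => exact ⟨by simp [content], by simp [content], trivial, trivial⟩
  | node l x r ihl ihr =>
    obtain ⟨h1, h2, h3, h4⟩ := ht
    by_cases h : a ≤ x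
    · simp only [rIns, if_pos h]
      refine ⟨?_, h2, ihl h3, h4⟩
      intro y hy; rw [content_rIns] at hy
      rcases Multiset.mem_cons.1 hy with rfl | hy
      · exact h
      · exact h1 y hy
    · simp only [rIns, if_neg h]
      refine ⟨h1, ?_, h3, ihr h4⟩
      intro y hy; rw [content_rIns] at hy
      rcases Multiset.mem_cons.1 hy with rfl | hy
      · exact lt_of_not_ge h
      · exact h2 y hy

lemma sorted_infixRead_s6 (t : BT ℕ+) (ht : IsRBST t) : (infixRead t).Pairwise (· ≤ ·) := by
  induction t with
  | leaf => simp [infixRead]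
  | node l a r ihl ihr =>
    obtain ⟨h1, h2, h3, h4⟩ := ht
    simp only [infixRead]
    rw [List.pairwise_append]
    refine ⟨ihl h3, ?_, ?_⟩
    · rw [List.pairwise_cons]
      refine ⟨?_, ihr h4⟩
      intro b hb
      exact le_of_lt (h2 b (by rw [← infixRead_coe]; exact_mod_cast hb))
    · intro x hx b hb
      have hx' : x ≤ a := h1 x (by rw [← infixRead_coe]; exact_mod_cast hx)
      rcases List.mem_cons.1 hb with rfl | hb
      · exact hx'
      · exact hx'.trans (le_of_lt (h2 b (by rw [← infixRead_coe]; exact_mod_cast hb)))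

lemma eq_of_shape_infix {t t' : BT α} (hs : shape t = shape t')
    (hi : infixRead t = infixRead t') : t = t' := by
  induction t generalizing t' with
  | leaf => cases t' with
    | leaf => rfl
    | node l a r => simp [shape, map] at hs
  | node l a r ihl ihr =>
    cases t' with
    | leaf => simp [shape, map] at hs
    | node l' a' r' =>
      simp only [shape, map, node.injEq] at hs
      obtain ⟨hsl, -, hsr⟩ := hs
      simp only [infixRead] at hi
      have hlen : (infixRead l).length = (infixRead l').length := by
        rw [length_infixRead, length_infixRead]
        have := size_map (fun _ => ()) l
        have := size_map (fun _ => ()) l'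
        have : size (shape l) = size l := size_map _ l
        have : size (shape l') = size l' := size_map _ l'
        rw [← size_map (fun _ => ()) l, ← size_map (fun _ => ()) l']
        exact congrArg size hsl
      obtain ⟨h1, h2⟩ := List.append_inj hi hlen
      injection h2 with h2a h2b
      exact by rw [ihl hsl h1, h2a, ihr hsr h2b]

lemma rbst_ext {t t' : BT ℕ+} (ht : IsRBST t) (ht' : IsRBST t')
    (hs : shape t = shape t') (hc : content t = content t') : t = t' := by
  refine eq_of_shape_infix hs ?_
  refine List.Perm.eq_of_pairwise' (sorted_infixRead_s6 t ht) (sorted_infixRead_s6 t' ht') ?_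
  rw [← Multiset.coe_eq_coe, infixRead_coe, infixRead_coe]
  exact hc

end BT
open BT

lemma content_Psylv (u : List ℕ+) : content (Psylv u) = ↑u := by
  induction u with
  | nil => rfl
  | cons a u ih =>
    show content (rIns a (Psylv u)) = _
    rw [content_rIns, ih]
    rfl

lemma isRBST_Psylv (u : List ℕ+) : IsRBST (Psylv u) := by
  induction u with
  | nil => trivial
  | cons a u ih => exact isRBST_rIns a _ ih

/-- Insertion of indices, comparing by a boolean comparison. -/
def insC (c : ℕ → ℕ → Bool) (i : ℕ) : BT ℕ → BT ℕ
  | .leaf => .node .leaf i .leaf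
  | .node l x r => if c i x then .node (insC c i l) x r else .node l x (insC c i r)

lemma content_insC (c : ℕ → ℕ → Bool) (i : ℕ) (t : BT ℕ) :
    content (insC c i t) = i ::ₘ content t := by
  induction t with
  | leaf => rfl
  | node l x r ihl ihr =>
    by_cases h : c i x
    · simp only [insC, if_pos h, content, ihl]
      rw [Multiset.cons_swap]; simp [Multiset.cons_add]
    · simp only [insC, if_neg h, content, ihr]
      rw [Multiset.cons_swap]; simp [Multiset.add_cons]

lemma map_insC (c : ℕ → ℕ → Bool) (f : ℕ → ℕ+) (i : ℕ) (t : BT ℕ)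
    (h : ∀ j ∈ content t, c i j = decide (f i ≤ f j)) :
    map f (insC c i t) = rIns (f i) (map f t) := by
  induction t with
  | leaf => rfl
  | node l x r ihl ihr =>
    have hx : c i x = decide (f i ≤ f x) := h x (by simp [content])
    by_cases hc : f i ≤ f x
    · rw [show insC c i (.node l x r) = .node (insC c i l) x r by
        simp [insC, hx, hc]]
      simp only [map, rIns, if_pos hc]
      rw [ihl fun j hj => h j (by simp [content, hj])]
    · rw [show insC c i (.node l x r) = .node l x (insC c i r) by
        simp [insC, hx, hc]]
      simp only [map, rIns, if_neg hc]
      rw [ihr fun j hj => h j (by simp [content, hj])]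

lemma foldr_insC_map (c : ℕ → ℕ → Bool) (f : ℕ → ℕ+) :
    ∀ (l : List ℕ) (t : BT ℕ),
    (∀ i ∈ l, ∀ j ∈ content t, c i j = decide (f i ≤ f j)) →
    l.Pairwise (fun i j => c i j = decide (f i ≤ f j)) →
    map f (l.foldr (insC c) t) = (l.map f).foldr rIns (map f t) := by
  intro l
  induction l with
  | nil => intro t _ _; rfl
  | cons i l ih =>
    intro t ht hp
    rw [List.pairwise_cons] at hp
    simp only [List.foldr_cons, List.map_cons]
    rw [← ih t (fun i hi j hj => ht i (by simp [hi]) j hj) hp.2]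
    apply map_insC
    intro j hj
    have hc : content (l.foldr (insC c) t) = ↑l + content t := by
      clear * -
      induction l with
      | nil => simp
      | cons a l ih => rw [List.foldr_cons, content_insC, ih, ← Multiset.cons_coe, Multiset.cons_add]
    rw [hc] at hj
    rcases Multiset.mem_add.1 hj with hj | hj
    · exact hp.1 j (by exact_mod_cast hj)
    · exact ht i (by simp) j hj

lemma insC_congr (c c' : ℕ → ℕ → Bool) (i : ℕ) (t : BT ℕ)
    (h : ∀ j ∈ content t, c i j = c' i j) : insC c i t = insC c' i t := by
  induction t with
  | leaf => rfl
  | node l x r ihl ihr =>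
    have hx : c i x = c' i x := h x (by simp [content])
    by_cases hc : c i x
    · rw [show insC c i (.node l x r) = .node (insC c i l) x r by simp [insC, hc],
        show insC c' i (.node l x r) = .node (insC c' i l) x r by simp [insC, ← hx, hc]]
      rw [ihl fun j hj => h j (by simp [content, hj])]
    · rw [show insC c i (.node l x r) = .node l x (insC c i r) by simp [insC, hc],
        show insC c' i (.node l x r) = .node l x (insC c' i r) by simp [insC, ← hx, hc]]
      rw [ihr fun j hj => h j (by simp [content, hj])]

lemma foldr_insC_congr (c c' : ℕ → ℕ → Bool) :
    ∀ (l : List ℕ) (t : BT ℕ),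
    (∀ i ∈ l, ∀ j ∈ content t, c i j = c' i j) →
    l.Pairwise (fun i j => c i j = c' i j) →
    l.foldr (insC c) t = l.foldr (insC c') t := by
  intro l
  induction l with
  | nil => intro t _ _; rfl
  | cons i l ih =>
    intro t ht hp
    rw [List.pairwise_cons] at hp
    simp only [List.foldr_cons]
    rw [← ih t (fun i hi j hj => ht i (by simp [hi]) j hj) hp.2]
    apply insC_congr
    intro j hj
    have hc : content (l.foldr (insC c) t) = ↑l + content t := by
      clear * -
      induction l with
      | nil => simp
      | cons a l ih => rw [List.foldr_cons, content_insC, ih, ← Multiset.cons_coe, Multiset.cons_add]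
    rw [hc] at hj
    rcases Multiset.mem_add.1 hj with hj | hj
    · exact hp.1 j (by exact_mod_cast hj)
    · exact ht i (by simp) j hj

lemma map_getD_range (y : List ℕ+) : (List.range y.length).map (fun i => y.getD i 1) = y := by
  apply List.ext_getElem
  · simp
  · intro i h1 h2
    simp only [List.getElem_map, List.getElem_range]
    rw [List.getD_eq_getElem]

/-- `Psylv y` as a map of the index tree. -/
lemma Psylv_eq_idx (y : List ℕ+) :
    Psylv y = map (fun i => y.getD i 1)
      ((List.range y.length).foldr (insC (fun i j => decide (y.getD i 1 ≤ y.getD j 1))) .leaf) := by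
  rw [foldr_insC_map _ _ _ _ (by intro i _ j hj; simp [content] at hj)
    (List.pairwise_iff_forall_sublist.2 (by intro i j _; rfl)),
    map_getD_range]
  rfl

/-- Shape of the sylvester tree only depends on pairwise (left-to-right) comparisons. -/
lemma Psylv_shape_congr (y z : List ℕ+) (hlen : y.length = z.length)
    (h : ∀ i j, i < j → j < y.length → ((y.getD i 1 ≤ y.getD j 1) ↔ (z.getD i 1 ≤ z.getD j 1))) :
    shape (Psylv y) = shape (Psylv z) := by
  rw [Psylv_eq_idx y, Psylv_eq_idx z, shape_map, shape_map, hlen]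
  congr 1
  apply foldr_insC_congr
  · intro i _ j hj; simp [content] at hj
  · rw [List.pairwise_iff_getElem]
    intro i j hi hj hij
    simp only [List.getElem_range] at *
    rw [List.length_range] at hj
    simp only [decide_eq_decide]
    exact h i j hij (hlen ▸ hj)
/-- The natural-number value of the `j`-th letter of the standardization. -/
def stdN (u : List ℕ+) (j : ℕ) : ℕ :=
  u.countP (fun b => decide (b < u.getD j 1)) +
    (u.take (j + 1)).countP (fun b => decide (b = u.getD j 1))

lemma length_stdWord (u : List ℕ+) : (stdWord u).length = u.length := by
  simp [stdWord]

lemma stdWord_getD (u : List ℕ+) (j : ℕ) (hj : j < u.length) :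
    (stdWord u).getD j 1 = (stdN u j).toPNat' := by
  have h' : j < (stdWord u).length := by rwa [length_stdWord]
  rw [List.getD_eq_getElem _ _ h']
  show (stdWord u)[j] = _
  unfold stdWord
  show (List.mapIdx _ u)[j]'(by simpa using hj) = _
  rw [List.getElem_mapIdx]
  congr 2 <;> rw [List.getD_eq_getElem _ _ hj]

lemma countP_lt_add_countP_eq (u : List ℕ+) (a : ℕ+) :
    u.countP (fun b => decide (b < a)) + u.countP (fun b => decide (b = a)) =
      u.countP (fun b => decide (b ≤ a)) := by
  induction u with
  | nil => rfl
  | cons x u ih =>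
    simp only [List.countP_cons]
    rcases lt_trichotomy x a with h | h | h
    · simp [h, ne_of_lt h, le_of_lt h]; omega
    · subst h; simp; omega
    · simp [not_lt.2 (le_of_lt h), (ne_of_gt h : x ≠ a), not_le.2 h]; omega

lemma one_le_take_countP (u : List ℕ+) (j : ℕ) (hj : j < u.length) :
    0 < (u.take (j + 1)).countP (fun b => decide (b = u.getD j 1)) := by
    rw [List.countP_pos_iff]
    refine ⟨u.getD j 1, ?_, by simp⟩
    rw [List.getD_eq_getElem _ _ hj]
    have : u[j] = (u.take (j+1))[j]'(by simp; omega) := by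
      rw [List.getElem_take]
    rw [this]
    exact List.getElem_mem _

lemma one_le_stdN (u : List ℕ+) (j : ℕ) (hj : j < u.length) : 1 ≤ stdN u j := by
  have := one_le_take_countP u j hj
  unfold stdN; omega

lemma stdN_le (u : List ℕ+) (j : ℕ) : stdN u j ≤ u.length := by
  have h1 : (u.take (j + 1)).countP (fun b => decide (b = u.getD j 1)) ≤
      u.countP (fun b => decide (b = u.getD j 1)) :=
    List.Sublist.countP_le (List.take_sublist _ _)
  have h2 := countP_lt_add_countP_eq u (u.getD j 1)
  have h3 := List.countP_le_length (l := u) (p := fun b => decide (b ≤ u.getD j 1))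
  unfold stdN; omega

lemma stdN_lt_of_val_lt (u : List ℕ+) (i j : ℕ) (hj : j < u.length)
    (h : u.getD i 1 < u.getD j 1) : stdN u i < stdN u j := by
  have h1 : (u.take (i + 1)).countP (fun b => decide (b = u.getD i 1)) ≤
      u.countP (fun b => decide (b = u.getD i 1)) :=
    List.Sublist.countP_le (List.take_sublist _ _)
  have h2 := countP_lt_add_countP_eq u (u.getD i 1)
  have h3 : u.countP (fun b => decide (b ≤ u.getD i 1)) ≤
      u.countP (fun b => decide (b < u.getD j 1)) := by
    apply List.countP_mono_left
    intro b _ hb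
    simp only [decide_eq_true_eq] at *
    exact lt_of_le_of_lt hb h
  have h4 := one_le_take_countP u j hj
  unfold stdN at *
  omega

lemma stdN_lt_of_val_eq (u : List ℕ+) (i j : ℕ) (hij : i < j) (hj : j < u.length)
    (h : u.getD i 1 = u.getD j 1) : stdN u i < stdN u j := by
  have key : (u.take (i + 1)).countP (fun b => decide (b = u.getD j 1)) <
      (u.take (j + 1)).countP (fun b => decide (b = u.getD j 1)) := by
    have hsplit : u.take (j + 1) = u.take (i + 1) ++ (u.take (j + 1)).drop (i + 1) := by
      have h1 : List.take (i+1) (List.take (j+1) u) = List.take (i+1) u := by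
        rw [List.take_take]; congr 1; omega
      conv_lhs => rw [← List.take_append_drop (i+1) (List.take (j+1) u)]
      rw [h1]
    rw [hsplit, List.countP_append]
    have : 0 < ((u.take (j + 1)).drop (i + 1)).countP (fun b => decide (b = u.getD j 1)) := by
      rw [List.countP_pos_iff]
      refine ⟨u.getD j 1, ?_, by simp⟩
      have hlen : j - (i + 1) < ((u.take (j + 1)).drop (i + 1)).length := by
        simp; omega
      have : ((u.take (j + 1)).drop (i + 1))[j - (i+1)] = u[j] := by
        rw [List.getElem_drop, List.getElem_take]
        congr 1; omega
      rw [List.getD_eq_getElem _ _ hj, ← this]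
      exact List.getElem_mem _
    omega
  unfold stdN
  rw [h]
  omega

lemma stdN_lt (u : List ℕ+) (i j : ℕ) (hij : i < j) (hj : j < u.length)
    (h : u.getD i 1 ≤ u.getD j 1) : stdN u i < stdN u j := by
  rcases lt_or_eq_of_le h with h | h
  · exact stdN_lt_of_val_lt u i j hj h
  · exact stdN_lt_of_val_eq u i j hij hj h

lemma stdWord_getD_lt (u : List ℕ+) (i j : ℕ) (hi : i < u.length) (hj : j < u.length)
    (h : stdN u i < stdN u j) : (stdWord u).getD i 1 < (stdWord u).getD j 1 := by
  rw [stdWord_getD u i hi, stdWord_getD u j hj, ← PNat.coe_lt_coe,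
    PNat.toPNat'_coe (one_le_stdN u i hi), PNat.toPNat'_coe (one_le_stdN u j hj)]
  exact h

lemma stdCmp (u : List ℕ+) (i j : ℕ) (hij : i < j) (hj : j < u.length) :
    (u.getD i 1 ≤ u.getD j 1) ↔ ((stdWord u).getD i 1 ≤ (stdWord u).getD j 1) := by
  have hi : i < u.length := hij.trans hj
  constructor
  · intro h
    exact le_of_lt (stdWord_getD_lt u i j hi hj (stdN_lt u i j hij hj h))
  · intro h
    by_contra hc
    push_neg at hc
    have := stdWord_getD_lt u j i hj hi (stdN_lt_of_val_lt u j i hi hc)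
    exact absurd h (not_le.2 this)

lemma nodup_stdWord (u : List ℕ+) : (stdWord u).Nodup := by
  rw [List.nodup_iff_injective_get]
  intro ⟨i, hi⟩ ⟨j, hj⟩ hval
  rw [length_stdWord] at hi hj
  simp only [Fin.mk.injEq]
  by_contra hne
  have key : ∀ i j, i < j → j < u.length →
      (stdWord u).getD i 1 ≠ (stdWord u).getD j 1 := by
    intro i j hij hj
    rcases le_or_gt (u.getD i 1) (u.getD j 1) with h | h
    · exact ne_of_lt (stdWord_getD_lt u i j (hij.trans hj) hj (stdN_lt u i j hij hj h))
    · exact (ne_of_lt (stdWord_getD_lt u j i hj (hij.trans hj)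
        (stdN_lt_of_val_lt u j i (hij.trans hj) h))).symm
  have hget : ∀ (i : ℕ) (hi : i < u.length), (stdWord u).get ⟨i, by rwa [length_stdWord]⟩ =
      (stdWord u).getD i 1 := by
    intro i hi
    rw [List.getD_eq_getElem _ _ (by rwa [length_stdWord])]
    rfl
  rcases Nat.lt_or_ge i j with h | h
  · exact key i j h hj (by rw [← hget i hi, ← hget j hj, hval])
  · have h' : j < i := by omega
    exact key j i h' hi (by rw [← hget i hi, ← hget j hj, hval])

/-- The canonical standard word `1, 2, …, k`. -/
def canon (k : ℕ) : List ℕ+ := (List.range k).map (fun j => (j + 1).toPNat')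

lemma canon_sorted (k : ℕ) : (canon k).Pairwise (· ≤ ·) := by
  apply List.Pairwise.map
  · intro a b (hab : a < b)
    show (a + 1).toPNat' ≤ (b + 1).toPNat'
    rw [← PNat.coe_le_coe, PNat.toPNat'_coe (by omega), PNat.toPNat'_coe (by omega)]
    omega
  · exact List.pairwise_lt_range

lemma canon_nodup (k : ℕ) : (canon k).Nodup := by
  apply List.Nodup.map
  · intro a b hab
    have := congrArg (fun x : ℕ+ => (x : ℕ)) hab
    simp only [PNat.toPNat'_coe (Nat.succ_pos _)] at this
    omega
  · exact List.nodup_range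

lemma mem_canon (k : ℕ) (b : ℕ+) : b ∈ canon k ↔ (b : ℕ) ≤ k := by
  constructor
  · intro hb
    obtain ⟨j, hj, rfl⟩ := List.mem_map.1 hb
    rw [List.mem_range] at hj
    rw [PNat.toPNat'_coe (by omega)]
    omega
  · intro hb
    rw [canon, List.mem_map]
    refine ⟨(b : ℕ) - 1, List.mem_range.2 (by have := b.pos; omega), ?_⟩
    have := b.pos
    apply PNat.coe_injective
    rw [PNat.toPNat'_coe (by omega)]
    omega

lemma stdWord_perm_canon (u : List ℕ+) : (stdWord u).Perm (canon u.length) := by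
  have hsub : stdWord u ⊆ canon u.length := by
    intro b hb
    obtain ⟨j, hj, rfl⟩ : ∃ j, ∃ (h : j < (stdWord u).length), (stdWord u)[j] = b := by
      obtain ⟨j, hj, hb⟩ := List.getElem_of_mem hb
      exact ⟨j, hj, hb⟩
    have hj' : j < u.length := by rwa [length_stdWord] at hj
    have : (stdWord u)[j] = (stdWord u).getD j 1 := by
      rw [List.getD_eq_getElem _ _ hj]
    rw [this, stdWord_getD u j hj', mem_canon, PNat.toPNat'_coe (one_le_stdN u j hj')]
    exact stdN_le u j
  have hsp := List.subperm_of_subset (nodup_stdWord u) hsub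
  apply List.Subperm.perm_of_length_le hsp
  simp [canon, length_stdWord]
lemma foldr_max_mem (l : List ℕ+) (c : ℕ+) : l.foldr max c ∈ c :: l := by
  induction l with
  | nil => simp
  | cons a l ih =>
    simp only [List.foldr_cons]
    rcases max_choice a (l.foldr max c) with h | h <;> rw [h]
    · simp
    · rcases List.mem_cons.1 ih with h' | h'
      · rw [h']; simp
      · simp [h']

lemma le_foldr_max (l : List ℕ+) (c : ℕ+) : ∀ x ∈ c :: l, x ≤ l.foldr max c := by
  induction l with
  | nil => simp
  | cons a l ih =>
    intro x hx
    simp only [List.foldr_cons]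
    rcases List.mem_cons.1 hx with rfl | hx
    · exact le_max_of_le_right (ih x (by simp))
    · rcases List.mem_cons.1 hx with rfl | hx
      · exact le_max_left _ _
      · exact le_max_of_le_right (ih x (by simp [hx]))

lemma decAux_nil (n : ℕ) : decAux n [] = .leaf := by
  cases n <;> rfl

lemma decAux_fuel : ∀ (k : ℕ) (L : List ℕ+) (n n' : ℕ), L.length ≤ k → L.length ≤ n →
    L.length ≤ n' → decAux n L = decAux n' L := by
  intro k
  induction k with
  | zero =>
    intro L n n' hk _ _
    rw [List.length_eq_zero_iff.1 (Nat.le_zero.1 hk), decAux_nil, decAux_nil]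
  | succ k ih =>
    intro L n n' hk hn hn'
    cases L with
    | nil => rw [decAux_nil, decAux_nil]
    | cons a l =>
      have hpos : 0 < (a :: l).length := by simp
      obtain ⟨n, rfl⟩ : ∃ m, n = m + 1 := ⟨n - 1, by omega⟩
      obtain ⟨n', rfl⟩ : ∃ m, n' = m + 1 := ⟨n' - 1, by omega⟩
      show BT.node _ _ _ = BT.node _ _ _
      have hm : (a :: l).foldr max a ∈ a :: l := by
        rcases List.mem_cons.1 (foldr_max_mem (a :: l) a) with h | h
        · rw [h]; simp
        · exact h
      have hidx : (a :: l).idxOf ((a :: l).foldr max a) < (a :: l).length :=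
        List.idxOf_lt_length_iff.2 hm
      congr 1
      · apply ih
        · simp only [List.length_take]
          simp at hk hidx ⊢; omega
        · simp only [List.length_take]; simp at hn hidx ⊢; omega
        · simp only [List.length_take]; simp at hn' hidx ⊢; omega
      · apply ih
        · simp only [List.length_drop]; simp at hk ⊢; omega
        · simp only [List.length_drop]; simp at hn ⊢; omega
        · simp only [List.length_drop]; simp at hn' ⊢; omega

lemma decAux_eq_decTree (n : ℕ) (L : List ℕ+) (h : L.length ≤ n) :
    decAux n L = decTree L :=
  decAux_fuel L.length L n L.length le_rfl h le_rfl

lemma foldr_max_eq (L : List ℕ+) (c m : ℕ+) (hc : c ≤ m) (hm : m ∈ L)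
    (hle : ∀ x ∈ L, x ≤ m) : L.foldr max c = m := by
  apply le_antisymm
  · rcases List.mem_cons.1 (foldr_max_mem L c) with h | h
    · rw [h]; exact hc
    · exact hle _ h
  · exact le_foldr_max L c m (by simp [hm])

lemma decAux_split (n : ℕ) (A B : List ℕ+) (m : ℕ+)
    (hA : ∀ x ∈ A, x < m) (hB : ∀ x ∈ B, x ≤ m) :
    decAux (n + 1) (A ++ m :: B) = .node (decAux n A) m (decAux n B) := by
  have hle : ∀ x ∈ A ++ m :: B, x ≤ m := by
    intro x hx
    rcases List.mem_append.1 hx with h | h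
    · exact le_of_lt (hA _ h)
    · rcases List.mem_cons.1 h with rfl | h
      · exact le_rfl
      · exact hB _ h
  have hmm : m ∈ A ++ m :: B := by simp
  have hidx : (A ++ m :: B).idxOf m = A.length := by
    rw [List.idxOf_append_of_notMem (fun hm => lt_irrefl m (hA m hm))]
    simp [List.idxOf_cons_self]
  have htake : (A ++ m :: B).take A.length = A := List.take_left
  have hdrop : (A ++ m :: B).drop (A.length + 1) = B := by
    have : A ++ m :: B = (A ++ [m]) ++ B := by simp
    rw [this, ← show (A ++ [m]).length = A.length + 1 by simp, List.drop_left]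
  cases A with
  | nil =>
    have hmax : (m :: B).foldr max m = m :=
      foldr_max_eq _ _ _ le_rfl (by simp) (by simpa using hle)
    show BT.node _ _ _ = _
    simp only [List.nil_append] at hidx htake hdrop ⊢
    rw [show (m :: B).foldr max m = List.foldr max m (m :: B) from rfl] at hmax
    rw [hmax, hidx]
    simp only [List.length_nil] at htake hdrop ⊢
    rw [htake, hdrop, decAux_nil]
  | cons a A' =>
    have hmem : m ∈ (a :: A') ++ m :: B := by simp
    have hmax : List.foldr max a (a :: (A' ++ m :: B)) = m :=
      foldr_max_eq _ _ _ (le_of_lt (hA a (by simp))) hmem hle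
    have hidx' : List.idxOf m (a :: (A' ++ m :: B)) = A'.length + 1 := by
      rw [show a :: (A' ++ m :: B) = (a :: A') ++ m :: B from rfl, hidx]; rfl
    have htake' : List.take (A'.length + 1) (a :: (A' ++ m :: B)) = a :: A' := by
      rw [show a :: (A' ++ m :: B) = (a :: A') ++ m :: B from rfl,
        show A'.length + 1 = (a :: A').length from rfl, htake]
    have hdrop' : List.drop (A'.length + 1 + 1) (a :: (A' ++ m :: B)) = B := by
      rw [show a :: (A' ++ m :: B) = (a :: A') ++ m :: B from rfl,
        show A'.length + 1 = (a :: A').length from rfl, hdrop]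
    show BT.node _ _ _ = _
    simp only [List.append_eq]
    rw [hmax, hidx', htake', hdrop']

/-- Sorted positions: the positions of the letters of `y`, listed in increasing
order of the letters. -/
def spos (y : List ℕ+) : List ℕ+ :=
  (y.mergeSort (· ≤ ·)).map (fun b => (y.idxOf b + 1).toPNat')

lemma foldr_rIns_node (u : List ℕ+) (l r : BT ℕ+) (x : ℕ+) :
    u.foldr rIns (.node l x r) =
      .node ((u.filter (fun b => b ≤ x)).foldr rIns l) x
        ((u.filter (fun b => ¬ b ≤ x)).foldr rIns r) := by
  induction u with
  | nil => simp
  | cons a u ih =>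
    by_cases h : a ≤ x
    · simp only [List.foldr_cons, ih, List.filter_cons, h, decide_true, if_pos]
      simp [rIns, h]
    · simp only [List.foldr_cons, ih, List.filter_cons]
      simp [rIns, h]

lemma Psylv_append (y' : List ℕ+) (a : ℕ+) :
    Psylv (y' ++ [a]) =
      .node (Psylv (y'.filter (fun b => b ≤ a))) a
        (Psylv (y'.filter (fun b => ¬ b ≤ a))) := by
  unfold Psylv
  rw [List.foldr_append]
  show y'.foldr rIns (.node .leaf a .leaf) = _
  rw [foldr_rIns_node]

lemma sorted_filter_split (s : List ℕ+) (hs : s.Pairwise (· ≤ ·)) (a : ℕ+) :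
    s = s.filter (fun b => b ≤ a) ++ s.filter (fun b => ¬ b ≤ a) := by
  induction s with
  | nil => simp
  | cons x s ih =>
    rw [List.pairwise_cons] at hs
    by_cases h : x ≤ a
    · rw [show (x :: s).filter (fun b => decide (b ≤ a)) =
          x :: s.filter (fun b => decide (b ≤ a)) by rw [List.filter_cons_of_pos (by simp [h])],
        show (x :: s).filter (fun b => decide (¬ b ≤ a)) =
          s.filter (fun b => decide (¬ b ≤ a)) by rw [List.filter_cons_of_neg (by simp [h])]]
      rw [List.cons_append]
      exact congrArg (x :: ·) (ih hs.2)
    · have hgt : ∀ b ∈ x :: s, ¬ b ≤ a := by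
        intro b hb hba
        rcases List.mem_cons.1 hb with rfl | hb
        · exact h hba
        · exact h ((hs.1 b hb).trans hba)
      have h1 : (x :: s).filter (fun b => decide (b ≤ a)) = [] := by
        rw [List.filter_eq_nil_iff]
        intro b hb
        simpa using hgt b hb
      have h2 : (x :: s).filter (fun b => decide (¬ b ≤ a)) = x :: s := by
        rw [List.filter_eq_self]
        intro b hb
        simpa using hgt b hb
      rw [h1, h2, List.nil_append]

lemma sorted_nodup_filter_le (s : List ℕ+) (hs : s.Pairwise (· ≤ ·)) (hnd : s.Nodup)
    (a : ℕ+) (ha : a ∈ s) :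
    s.filter (fun b => b ≤ a) = s.filter (fun b => b < a) ++ [a] := by
  induction s with
  | nil => simp at ha
  | cons x s ih =>
    rw [List.pairwise_cons] at hs
    rw [List.nodup_cons] at hnd
    by_cases hxa : x = a
    · subst hxa
      have h1 : s.filter (fun b => decide (b ≤ x)) = [] := by
        rw [List.filter_eq_nil_iff]
        intro b hb
        simp only [decide_eq_true_eq]
        intro hbx
        exact hnd.1 (by rwa [le_antisymm hbx (hs.1 b hb)] at hb)
      have h2 : (x :: s).filter (fun b => decide (b < x)) = [] := by
        rw [List.filter_eq_nil_iff]
        intro b hb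
        simp only [decide_eq_true_eq]
        rcases List.mem_cons.1 hb with rfl | hb
        · exact lt_irrefl b
        · exact not_lt.2 (hs.1 b hb)
      rw [h2, List.nil_append, List.filter_cons_of_pos (by simp), h1]
    · have ha' : a ∈ s := by
        rcases List.mem_cons.1 ha with h | h
        · exact absurd h.symm hxa
        · exact h
      have hlt : x < a := lt_of_le_of_ne (hs.1 a ha') hxa
      rw [List.filter_cons_of_pos (by simp [le_of_lt hlt]),
        List.filter_cons_of_pos (by simp [hlt]), List.cons_append]
      exact congrArg (x :: ·) (ih hs.2 hnd.2 ha')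
lemma sublist_idxOf_lt (l' l : List ℕ+) (hs : List.Sublist l' l) (hnd : l.Nodup)
    (i j : ℕ) (hij : i < j) (hj : j < l'.length) :
    l.idxOf (l'.getD i 1) < l.idxOf (l'.getD j 1) := by
  obtain ⟨f, hf⟩ := List.sublist_iff_exists_fin_orderEmbedding_get_eq.1 hs
  have hi : i < l'.length := hij.trans hj
  rw [List.getD_eq_getElem _ _ hi, List.getD_eq_getElem _ _ hj]
  have h1 : l'[i] = l.get (f ⟨i, hi⟩) := hf ⟨i, hi⟩
  have h2 : l'[j] = l.get (f ⟨j, hj⟩) := hf ⟨j, hj⟩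
  rw [h1, h2, List.get_idxOf hnd, List.get_idxOf hnd]
  exact f.strictMono (by exact hij)

lemma mergeSort_sorted' (y : List ℕ+) : (y.mergeSort (· ≤ ·)).Pairwise (· ≤ ·) := by
  simpa using List.pairwise_mergeSort' (r := fun a b : ℕ+ => a ≤ b) y

lemma mergeSort_perm' (y : List ℕ+) : List.Perm (y.mergeSort (· ≤ ·)) y :=
  List.mergeSort_perm y _

lemma spos_map (y : List ℕ+) :
    spos y = (y.mergeSort (· ≤ ·)).map (fun b => (y.idxOf b + 1).toPNat') := rfl

lemma length_spos (y : List ℕ+) : (spos y).length = y.length := by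
  rw [spos_map, List.length_map, (mergeSort_perm' y).length_eq]

/-- `invWord` of a word that is a permutation of the canonical standard word. -/
lemma spos_eq_invWord (w : List ℕ+) (h : w.Perm (canon w.length)) :
    spos w = invWord w := by
  have hms : w.mergeSort (· ≤ ·) = canon w.length := by
    apply List.Perm.eq_of_pairwise'
      (mergeSort_sorted' w) (canon_sorted _) ((mergeSort_perm' w).trans h)
  rw [spos_map, hms, canon, List.map_map, invWord]
  rfl
lemma decTree_spos_map : ∀ (k : ℕ) (y : List ℕ+), y.length ≤ k → y.Nodup →
    ∀ f : ℕ+ → ℕ+,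
    (∀ p q : ℕ+, (p : ℕ) ≤ y.length → (q : ℕ) ≤ y.length → p < q → f p < f q) →
    decTree ((spos y).map f) =
      map (fun b => f ((y.idxOf b + 1).toPNat')) (Psylv y) := by
  intro k
  induction k with
  | zero =>
    intro y hk _ f _
    rw [List.length_eq_zero_iff.1 (Nat.le_zero.1 hk), spos_map, List.mergeSort_nil]
    rfl
  | succ k ih =>
    intro y hk hnd f hf
    rcases List.eq_nil_or_concat y with rfl | ⟨y', a, rfl⟩
    · rw [spos_map, List.mergeSort_nil]; rfl
    rw [List.concat_eq_append] at hk hnd hf ⊢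
    have hk' : y'.length ≤ k := by simp at hk; omega
    have hay' : a ∉ y' := by
      rw [List.nodup_append] at hnd
      intro h
      exact hnd.2.2 a h a (by simp) rfl
    have hnd' : y'.Nodup := by
      rw [List.nodup_append] at hnd
      exact hnd.1
    set s := (y' ++ [a]).mergeSort (· ≤ ·) with hs_def
    have hs_sorted : s.Pairwise (· ≤ ·) := mergeSort_sorted' _
    have hs_perm : List.Perm s (y' ++ [a]) := mergeSort_perm' _
    have hs_nodup : s.Nodup := hs_perm.nodup_iff.2 hnd
    have hmem : ∀ b, b ∈ s ↔ b ∈ y' ++ [a] := fun b => hs_perm.mem_iff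
    have hga : (y' ++ [a]).idxOf a = y'.length := by
      rw [List.idxOf_append_of_notMem hay']
      simp
    have hidx_mem : ∀ b ∈ y', (y' ++ [a]).idxOf b = y'.idxOf b ∧
        y'.idxOf b < y'.length := fun b hb =>
      ⟨List.idxOf_append_of_mem hb, List.idxOf_lt_length_iff.2 hb⟩
    -- the common treatment of the two subtrees
    have side : ∀ (p q : ℕ+ → Bool), (∀ b ∈ y', p b = q b) → q a = false →
        decAux y'.length ((s.filter q).map
            (fun b => f (((y' ++ [a]).idxOf b + 1).toPNat'))) =
          map (fun b => f (((y' ++ [a]).idxOf b + 1).toPNat'))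
            (Psylv (y'.filter p)) := by
      intro p q hpq hqa
      have hfe : (y' ++ [a]).filter q = y'.filter p := by
        rw [List.filter_append]
        have h1 : [a].filter q = [] := by simp [hqa]
        rw [h1, List.append_nil]
        exact List.filter_congr (fun b hb => (hpq b hb).symm)
      have hperm : List.Perm (s.filter q) (y'.filter p) := by
        rw [← hfe]
        exact hs_perm.filter q
      have hsubP : List.Sublist (y'.filter p) (y' ++ [a]) :=
        List.filter_sublist.trans (List.sublist_append_left _ _)
      have hndP : (y'.filter p).Nodup := hnd'.filter p
      have hsortP : (s.filter q).Pairwise (· ≤ ·) :=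
        hs_sorted.sublist List.filter_sublist
      have hms : (y'.filter p).mergeSort (· ≤ ·) = s.filter q :=
        List.Perm.eq_of_pairwise'
          (mergeSort_sorted' _) hsortP ((mergeSort_perm' _).trans hperm.symm)
      have hlenP : (y'.filter p).length ≤ k :=
        le_trans (List.length_filter_le _ _) hk'
      -- the transported relabelling function
      have hptg : ∀ b ∈ y'.filter p,
          (fun q' : ℕ+ => f ((((y' ++ [a]).idxOf
              ((y'.filter p).getD ((q' : ℕ) - 1) 1)) + 1).toPNat'))
            (((y'.filter p).idxOf b + 1).toPNat') =
          f (((y' ++ [a]).idxOf b + 1).toPNat') := by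
        intro b hb
        have hpos : 0 < (y'.filter p).idxOf b + 1 := Nat.succ_pos _
        simp only []
        rw [PNat.toPNat'_coe hpos, Nat.add_sub_cancel,
          List.getD_eq_getElem _ _ (List.idxOf_lt_length_iff.2 hb),
          List.getElem_idxOf (List.idxOf_lt_length_iff.2 hb)]
      have hf' : ∀ p' q' : ℕ+, (p' : ℕ) ≤ (y'.filter p).length →
          (q' : ℕ) ≤ (y'.filter p).length → p' < q' →
          f ((((y' ++ [a]).idxOf
              ((y'.filter p).getD ((p' : ℕ) - 1) 1)) + 1).toPNat') <
          f ((((y' ++ [a]).idxOf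
              ((y'.filter p).getD ((q' : ℕ) - 1) 1)) + 1).toPNat') := by
        intro p' q' hp' hq' hlt
        have hp1 := p'.pos
        have hq1 := q'.pos
        have hij : (p' : ℕ) - 1 < (q' : ℕ) - 1 := by
          have := (PNat.coe_lt_coe _ _).2 hlt
          omega
        have hjlen : (q' : ℕ) - 1 < (y'.filter p).length := by omega
        have hkey := sublist_idxOf_lt (y'.filter p) (y' ++ [a]) hsubP hnd
          ((p' : ℕ) - 1) ((q' : ℕ) - 1) hij hjlen
        have hbi : (y'.filter p).getD ((p' : ℕ) - 1) 1 ∈ y' ++ [a] := by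
          apply hsubP.subset
          rw [List.getD_eq_getElem _ _ (by omega)]
          exact List.getElem_mem _
        have hbj : (y'.filter p).getD ((q' : ℕ) - 1) 1 ∈ y' ++ [a] := by
          apply hsubP.subset
          rw [List.getD_eq_getElem _ _ hjlen]
          exact List.getElem_mem _
        have hii := List.idxOf_lt_length_iff.2 hbi
        have hjj := List.idxOf_lt_length_iff.2 hbj
        apply hf
        · rw [PNat.toPNat'_coe (Nat.succ_pos _)]; omega
        · rw [PNat.toPNat'_coe (Nat.succ_pos _)]; omega
        · rw [← PNat.coe_lt_coe, PNat.toPNat'_coe (Nat.succ_pos _),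
            PNat.toPNat'_coe (Nat.succ_pos _)]
          omega
      have ihP := ih (y'.filter p) hlenP hndP
        (fun q' : ℕ+ => f ((((y' ++ [a]).idxOf
            ((y'.filter p).getD ((q' : ℕ) - 1) 1)) + 1).toPNat')) hf'
      have hstep1 : decAux y'.length ((s.filter q).map
          (fun b => f (((y' ++ [a]).idxOf b + 1).toPNat'))) =
          decTree ((s.filter q).map
            (fun b => f (((y' ++ [a]).idxOf b + 1).toPNat'))) := by
        apply decAux_eq_decTree
        rw [List.length_map, hperm.length_eq]
        exact List.length_filter_le _ _
      have hstep2 : (s.filter q).map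
          (fun b => f (((y' ++ [a]).idxOf b + 1).toPNat')) =
          (spos (y'.filter p)).map
            (fun q' : ℕ+ => f ((((y' ++ [a]).idxOf
              ((y'.filter p).getD ((q' : ℕ) - 1) 1)) + 1).toPNat')) := by
        rw [spos_map, hms, List.map_map]
        apply List.map_congr_left
        intro b hb
        have hbP : b ∈ y'.filter p := hperm.subset hb
        exact (hptg b hbP).symm
      rw [hstep1, hstep2, ihP]
      apply BT.map_congr
      intro b hb
      rw [content_Psylv] at hb
      exact hptg b (by exact_mod_cast hb)
    -- now decompose the full word
    have ha_s : a ∈ s := (hmem a).2 (by simp)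
    have hsplit : s = s.filter (fun b => decide (b < a)) ++
        a :: s.filter (fun b => decide (¬ b ≤ a)) := by
      have h0 := sorted_filter_split s hs_sorted a
      rw [sorted_nodup_filter_le s hs_sorted hs_nodup a ha_s,
        List.append_assoc, List.singleton_append] at h0
      exact h0
    have hsposy : spos (y' ++ [a]) =
        s.map (fun b => ((y' ++ [a]).idxOf b + 1).toPNat') := by
      rw [spos_map, ← hs_def]
    rw [Psylv_append, hsposy, hsplit, List.map_append, List.map_cons,
      List.map_append, List.map_cons, List.map_map, List.map_map]
    simp only [Function.comp_def]
    show decAux _ _ = _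
    have hlensum : (s.filter (fun b => decide (b < a))).length +
        (s.filter (fun b => decide (¬ b ≤ a))).length = y'.length := by
      have := congrArg List.length hsplit
      have h2 : s.length = y'.length + 1 := by
        rw [hs_perm.length_eq]; simp
      simp only [List.length_append, List.length_cons] at this
      omega
    have hlen1 : (List.map (fun b => f (((y' ++ [a]).idxOf b + 1).toPNat'))
          (s.filter (fun b => decide (b < a))) ++
        f (((y' ++ [a]).idxOf a + 1).toPNat') ::
          List.map (fun b => f (((y' ++ [a]).idxOf b + 1).toPNat'))
            (s.filter (fun b => decide (¬ b ≤ a)))).length = y'.length + 1 := by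
      simp only [List.length_append, List.length_cons, List.length_map]
      omega
    rw [hlen1]
    have hbnd : ∀ b ∈ s, b ≠ a → f (((y' ++ [a]).idxOf b + 1).toPNat') <
        f (((y' ++ [a]).idxOf a + 1).toPNat') := by
      intro b hb hba
      have hb' : b ∈ y' := by
        rcases List.mem_append.1 ((hmem b).1 hb) with h | h
        · exact h
        · exact absurd (List.mem_singleton.1 h) hba
      obtain ⟨he, hl⟩ := hidx_mem b hb'
      apply hf
      · rw [PNat.toPNat'_coe (Nat.succ_pos _)]
        simp only [List.length_append, List.length_singleton]
        omega
      · rw [PNat.toPNat'_coe (Nat.succ_pos _)]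
        simp only [List.length_append, List.length_singleton]
        rw [hga]
      · rw [← PNat.coe_lt_coe, PNat.toPNat'_coe (Nat.succ_pos _),
          PNat.toPNat'_coe (Nat.succ_pos _), he, hga]
        omega
    rw [decAux_split y'.length _ _ _ ?hA ?hB]
    case hA =>
      intro x hx
      obtain ⟨b, hb, rfl⟩ := List.mem_map.1 hx
      have hbs := List.mem_filter.1 hb
      have hblt : b < a := by simpa using hbs.2
      exact hbnd b hbs.1 (ne_of_lt hblt)
    case hB =>
      intro x hx
      obtain ⟨b, hb, rfl⟩ := List.mem_map.1 hx
      have hbs := List.mem_filter.1 hb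
      have hbgt : ¬ b ≤ a := by simpa using hbs.2
      exact le_of_lt (hbnd b hbs.1 (fun h => hbgt (le_of_eq h)))
    show BT.node _ _ _ = BT.node _ _ _
    congr 1
    · exact side (fun b => decide (b ≤ a)) (fun b => decide (b < a))
        (fun b hb => by
          simp only [decide_eq_decide]
          constructor
          · intro h
            exact lt_of_le_of_ne h (fun he => hay' (he ▸ hb))
          · exact le_of_lt)
        (by simp)
    · exact side (fun b => decide (¬ b ≤ a)) (fun b => decide (¬ b ≤ a))
        (fun _ _ => rfl) (by simp)
lemma shape_decTree_invWord_std (u : List ℕ+) :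
    shape (decTree (invWord (stdWord u))) = shape (Psylv u) := by
  have hperm : (stdWord u).Perm (canon (stdWord u).length) := by
    rw [length_stdWord]
    exact stdWord_perm_canon u
  have h1 : invWord (stdWord u) = spos (stdWord u) := (spos_eq_invWord _ hperm).symm
  have h2 : spos (stdWord u) = (spos (stdWord u)).map id := (List.map_id _).symm
  rw [h1, h2, decTree_spos_map (stdWord u).length (stdWord u) le_rfl
    (nodup_stdWord u) id (fun _ _ _ _ h => h), shape_map]
  apply Psylv_shape_congr _ _ (length_stdWord u)
  intro i j hij hj
  rw [length_stdWord] at hj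
  exact (stdCmp u i j hij hj).symm

/-- Two words insert to the same right strict binary search tree if and only
if they have the same weight and the decreasing trees of the inverses of
their standardizations have the same shape. -/
theorem Psylv_eq_iff_weight_and_shape (u v : List ℕ+) :
    Psylv u = Psylv v ↔
      (↑u : Multiset ℕ+) = (↑v : Multiset ℕ+) ∧
        shape (decTree (invWord (stdWord u))) =
          shape (decTree (invWord (stdWord v))) := by

  constructor
  · intro h
    constructor
    · rw [← content_Psylv u, ← content_Psylv v, h]
    · rw [shape_decTree_invWord_std u, shape_decTree_invWord_std v, h]
  · rintro ⟨hc, hs⟩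
    apply rbst_ext (isRBST_Psylv u) (isRBST_Psylv v)
    · rw [← shape_decTree_invWord_std u, ← shape_decTree_invWord_std v]
      exact hs
    · rw [content_Psylv, content_Psylv]
      exact hc
end

section
/- For any word u over the positive integers and any i, if the quasi-Kashiwara raising operator ė_i is defined on u then std(ė_i(u)) = std(u), and if the quasi-Kashiwara lowering operator ḟ_i is defined on u then std(ḟ_i(u)) = std(u). -/
open BT

lemma pn_ne_succ_lt_iff (a b : ℕ+) (h : a ≠ b + 1) : (b < a) ↔ (b + 1 < a) := by
  rw [← PNat.coe_lt_coe, ← PNat.coe_lt_coe]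
  have h' : (a:ℕ) ≠ (b:ℕ) + 1 := by
    intro hh; exact h (by rw [← PNat.coe_inj]; push_cast; omega)
  push_cast; omega

lemma pn_lt_succ_iff (a b : ℕ+) : (b < a + 1) ↔ (b < a ∨ b = a) := by
  rw [← PNat.coe_lt_coe, ← PNat.coe_lt_coe]
  constructor
  · intro hh
    have : (b:ℕ) < a ∨ (b:ℕ) = (a:ℕ) := by push_cast at hh ⊢; omega
    rcases this with h1 | h1
    · exact Or.inl h1
    · exact Or.inr (PNat.coe_inj.mp h1)
  · rintro (h1 | rfl)
    · push_cast; omega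
    · push_cast; omega

lemma countP_lt_succ (i : ℕ+) (X : List ℕ+) :
    X.countP (fun b => decide (b < i + 1)) =
      X.countP (fun b => decide (b < i)) + X.countP (fun b => decide (b = i)) := by
  induction X with
  | nil => rfl
  | cons a t ih =>
    rw [List.countP_cons, List.countP_cons, List.countP_cons, ih]
    by_cases h3 : a = i
    · subst h3; simp [pn_lt_succ_iff, lt_irrefl]; omega
    · by_cases h2 : a < i <;>
        simp only [decide_eq_true_eq, pn_lt_succ_iff, h2, h3, or_false, or_self,
          if_true, if_false, ite_true, ite_false] <;> omega

lemma not_mem_take_indexOf {α} [DecidableEq α] (a : α) (l : List α) :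
    a ∉ l.take (l.idxOf a) := by
  induction l with
  | nil => simp
  | cons b t ih =>
    by_cases h : b = a
    · subst h; rw [List.idxOf_cons_self]; simp
    · rw [List.idxOf_cons_ne _ h, List.take_succ_cons]
      simp only [List.mem_cons]
      rintro (rfl | hmem)
      · exact h rfl
      · exact ih hmem

lemma key_std (i : ℕ+) (L R : List ℕ+) (hL : (i + 1) ∉ L) (hR : i ∉ R) :
    stdWord (L ++ i :: R) = stdWord (L ++ (i + 1) :: R) := by
  apply List.ext_getElem (by simp [stdWord])
  intro j hj hj'
  simp only [stdWord, List.getElem_mapIdx]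
  have hjlen : j < L.length + (R.length + 1) := by
    simpa [stdWord] using hj
  congr 1
  have hiR : R.countP (fun b => decide (b = i)) = 0 :=
    List.countP_eq_zero.mpr (by intro a ha; simp; rintro rfl; exact hR ha)
  have hiL : L.countP (fun b => decide (b = i + 1)) = 0 :=
    List.countP_eq_zero.mpr (by intro a ha; simp; rintro rfl; exact hL ha)
  rcases lt_trichotomy j L.length with hlt | heq | hgt
  · -- position in L
    have e1 : (L ++ i :: R)[j]'(by simp only [List.length_append, List.length_cons]; omega)
        = L[j]'hlt := List.getElem_append_left hlt
    have e2 : (L ++ (i + 1) :: R)[j]'(by simp only [List.length_append, List.length_cons]; omega)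
        = L[j]'hlt := List.getElem_append_left hlt
    rw [e1, e2]
    set a := L[j]'hlt with ha
    have hane : a ≠ i + 1 := fun h => hL (h ▸ List.getElem_mem hlt)
    have ht0 : j + 1 - L.length = 0 := by omega
    have hdec : decide (i < a) = decide (i + 1 < a) := by
      simp only [decide_eq_decide]; exact pn_ne_succ_lt_iff a i hane
    simp only [List.take_append, ht0, List.take_zero,
      List.append_nil, List.countP_append, List.countP_cons, hdec]
  · -- middle position
    subst heq
    have e1 : (L ++ i :: R)[L.length]'(by simp only [List.length_append, List.length_cons]; omega)
        = i := by rw [List.getElem_append_right le_rfl]; simp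
    have e2 : (L ++ (i + 1) :: R)[L.length]'(by simp only [List.length_append, List.length_cons]; omega)
        = i + 1 := by rw [List.getElem_append_right le_rfl]; simp
    rw [e1, e2]
    have ht1 : L.length + 1 - L.length = 1 := by omega
    have hLtake : L.take (L.length + 1) = L := List.take_of_length_le (by omega)
    simp only [List.take_append, ht1, hLtake, List.countP_append,
      List.countP_cons, countP_lt_succ, hiR, hiL]
    have t1 : List.take 1 (i :: R) = [i] := rfl
    have t2 : List.take 1 ((i + 1) :: R) = [i + 1] := rfl
    rw [t1, t2]
    simp [List.countP_cons, lt_irrefl]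
    omega
  · -- position in R
    have hgt' : L.length ≤ j := le_of_lt hgt
    have hjR : j - L.length - 1 < R.length := by omega
    have e1 : (L ++ i :: R)[j]'(by simp only [List.length_append, List.length_cons]; omega)
        = R[j - L.length - 1]'hjR := by
      rw [List.getElem_append_right hgt']
      obtain ⟨m, hm⟩ : ∃ m, j - L.length = m + 1 := ⟨j - L.length - 1, by omega⟩
      simp only [hm, Nat.add_sub_cancel, List.getElem_cons_succ]
    have e2 : (L ++ (i + 1) :: R)[j]'(by simp only [List.length_append, List.length_cons]; omega)
        = R[j - L.length - 1]'hjR := by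
      rw [List.getElem_append_right hgt']
      obtain ⟨m, hm⟩ : ∃ m, j - L.length = m + 1 := ⟨j - L.length - 1, by omega⟩
      simp only [hm, Nat.add_sub_cancel, List.getElem_cons_succ]
    rw [e1, e2]
    set a := R[j - L.length - 1]'hjR with ha
    have hane : a ≠ i := fun h => hR (h ▸ List.getElem_mem hjR)
    have ht : j + 1 - L.length = (j - L.length) + 1 := by omega
    have hLtake : L.take (j + 1) = L := List.take_of_length_le (by omega)
    simp only [List.take_append, ht, hLtake, List.take_succ_cons,
      List.countP_append, List.countP_cons]
    by_cases hai : a = i + 1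
    · have d1 : decide (i < a) = true := by
        rw [hai, decide_eq_true_eq, ← PNat.coe_lt_coe]; push_cast; omega
      have d2 : decide (i = a) = false := by
        rw [hai, decide_eq_false_iff_not]
        intro h; have := congrArg (PNat.val) h; push_cast at this; omega
      have d3 : decide (i + 1 < a) = false := by
        rw [hai, decide_eq_false_iff_not]; exact lt_irrefl _
      have d4 : decide (i + 1 = a) = true := by rw [hai, decide_eq_true_eq]
      simp only [d1, d2, d3, d4, if_true, if_false]
      omega
    · have hdec : decide (i < a) = decide (i + 1 < a) := by
        simp only [decide_eq_decide]; exact pn_ne_succ_lt_iff a i hai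
      have d2 : decide (i = a) = false := by
        rw [decide_eq_false_iff_not]; exact fun h => hane h.symm
      have d4 : decide (i + 1 = a) = false := by
        rw [decide_eq_false_iff_not]; exact fun h => hai h.symm
      simp only [hdec, d2, d4]

/-- The quasi-Kashiwara operators preserve standardization. -/
theorem quasiKashiwara_preserves_std (u : List ℕ+) (i : ℕ+) :
    (qeDef i u → stdWord (qe i u) = stdWord u) ∧
    (qfDef i u → stdWord (qf i u) = stdWord u) := by
  constructor
  · rintro ⟨hsub, hmem⟩
    have hk : u.idxOf (i + 1) < u.length := List.idxOf_lt_length_iff.mpr hmem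
    have hu : u = u.take (u.idxOf (i + 1)) ++ (i + 1) :: u.drop (u.idxOf (i + 1) + 1) := by
      conv_lhs => rw [← List.take_append_drop (u.idxOf (i + 1)) u]
      rw [← List.getElem_cons_drop (h := hk), List.getElem_idxOf hk]
    have hset : qe i u
        = u.take (u.idxOf (i + 1)) ++ i :: u.drop (u.idxOf (i + 1) + 1) := by
      rw [qe, List.set_eq_take_append_cons_drop, if_pos hk]
    have hL : (i + 1) ∉ u.take (u.idxOf (i + 1)) := not_mem_take_indexOf _ _
    have hR : i ∉ u.drop (u.idxOf (i + 1) + 1) := by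
      intro hiR
      apply hsub
      have s1 : List.Sublist [i + 1, i] ((i + 1) :: u.drop (u.idxOf (i + 1) + 1)) :=
        List.Sublist.cons₂ _ (List.singleton_sublist.mpr hiR)
      have s2 : List.Sublist ((i + 1) :: u.drop (u.idxOf (i + 1) + 1)) u := by
        conv_rhs => rw [hu]
        exact List.sublist_append_right _ _
      exact s1.trans s2
    rw [hset, key_std i _ _ hL hR, ← hu]
  · rintro ⟨hsub, hmem⟩
    have hmem' : i ∈ u.reverse := List.mem_reverse.mpr hmem
    have hk : u.reverse.idxOf i < u.reverse.length := List.idxOf_lt_length_iff.mpr hmem'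
    set w := u.reverse with hwdef
    set L' := w.take (w.idxOf i) with hL'def
    set R' := w.drop (w.idxOf i + 1) with hR'def
    have hw : w = L' ++ i :: R' := by
      rw [hL'def, hR'def]
      conv_lhs => rw [← List.take_append_drop (w.idxOf i) w]
      rw [← List.getElem_cons_drop (h := hk), List.getElem_idxOf hk]
    have hset : w.set (w.idxOf i) (i + 1) = L' ++ (i + 1) :: R' := by
      rw [List.set_eq_take_append_cons_drop, if_pos hk]
    have hu2 : u = R'.reverse ++ i :: L'.reverse := by
      have : u = w.reverse := by rw [hwdef, List.reverse_reverse]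
      rw [this, hw, List.reverse_append, List.reverse_cons, List.append_assoc,
        List.singleton_append]
    have hqf : qf i u = R'.reverse ++ (i + 1) :: L'.reverse := by
      rw [qf, ← hwdef, hset, List.reverse_append, List.reverse_cons, List.append_assoc,
        List.singleton_append]
    have h1 : (i + 1) ∉ R'.reverse := by
      intro hmem2
      apply hsub
      have s1 : List.Sublist [i + 1] R'.reverse := List.singleton_sublist.mpr hmem2
      have s2 : List.Sublist [i] (i :: L'.reverse) :=
        List.Sublist.cons₂ _ (List.nil_sublist _)
      have := s1.append s2
      rw [← hu2] at this
      exact this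
    have h2 : i ∉ L'.reverse := fun h =>
      not_mem_take_indexOf i w (List.mem_reverse.mp h)
    rw [hqf, ← key_std i _ _ h1 h2, ← hu2]
end

section
/- A word u over the positive integers is highest-weight for the quasi-Kashiwara operators (i.e., ė_i(u) is undefined for all i) if and only if its right strict binary search tree P_sylv(u) satisfies: if the right interval partition of P_sylv(u) has ℓ parts, then for each a ∈ {1,...,ℓ}, all nodes in the a-th right interval are labelled a. -/
open BT

/-- The nodes of a tree in infix order, each paired with a flag recording
whether its right subtree is non-empty. -/
def infixNodes : BT ℕ+ → List (ℕ+ × Bool)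
  | .leaf => []
  | .node l a r => infixNodes l ++ (a, decide (r ≠ BT.leaf)) :: infixNodes r



namespace Sylv

abbrev E := ℕ+ × Bool

def setLastFlag : List E → List E
  | [] => []
  | [p] => [(p.1, true)]
  | p :: q :: r => p :: setLastFlag (q :: r)

def ins (c : ℕ+) (L : List E) : List E :=
  setLastFlag (L.takeWhile (fun p => p.1 < c)) ++ (c, false) :: L.dropWhile (fun p => p.1 < c)

def IL (u : List ℕ+) : List E := u.foldr ins []

def Rel (p q : E) : Prop := p.1 ≤ q.1 ∧ (p.2 = true → p.1 < q.1)

def Inv (L : List E) : Prop :=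
  List.IsChain Rel L ∧ ∀ p, L.getLast? = some p → p.2 = false

/- setLastFlag lemmas -/

theorem setLastFlag_cons_cons (p q : E) (r : List E) :
    setLastFlag (p :: q :: r) = p :: setLastFlag (q :: r) := rfl

theorem map_fst_setLastFlag : ∀ l : List E, (setLastFlag l).map Prod.fst = l.map Prod.fst
  | [] => rfl
  | [p] => rfl
  | p :: q :: r => by
      simp [setLastFlag_cons_cons, map_fst_setLastFlag (q :: r)]

theorem setLastFlag_append : ∀ (l₁ l₂ : List E), l₂ ≠ [] →
    setLastFlag (l₁ ++ l₂) = l₁ ++ setLastFlag l₂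
  | [], l₂, _ => by rw [List.nil_append, List.nil_append]
  | p :: l₁, l₂, h => by
      have ih := setLastFlag_append l₁ l₂ h
      cases hl : l₁ ++ l₂ with
      | nil => exact absurd (List.append_eq_nil_iff.mp hl).2 h
      | cons q r =>
          rw [List.cons_append, hl, setLastFlag_cons_cons, ← hl, ih, List.cons_append]

theorem mem_setLastFlag_of : ∀ (l : List E) (x : ℕ+), (x, true) ∈ l → (x, true) ∈ setLastFlag l
  | [], _, h => by simp at h
  | [p], x, h => by
      simp only [List.mem_singleton] at h
      subst h; exact List.mem_singleton.mpr rfl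
  | p :: q :: r, x, h => by
      rw [setLastFlag_cons_cons]
      rcases List.mem_cons.mp h with h | h
      · exact h ▸ List.mem_cons_self
      · exact List.mem_cons_of_mem _ (mem_setLastFlag_of (q :: r) x h)

theorem mem_of_mem_setLastFlag : ∀ (l : List E) (p : E), p ∈ setLastFlag l →
    p ∈ l ∨ ∃ q, l.getLast? = some q ∧ p = (q.1, true)
  | [], p, h => by simp [setLastFlag] at h
  | [q], p, h => by
      simp only [setLastFlag, List.mem_singleton] at h
      exact Or.inr ⟨q, by simp, h⟩
  | q :: q' :: r, p, h => by
      rw [setLastFlag_cons_cons] at h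
      rcases List.mem_cons.mp h with h | h
      · exact Or.inl (h ▸ List.mem_cons_self)
      · rcases mem_of_mem_setLastFlag (q' :: r) p h with h | ⟨w, hw, hp⟩
        · exact Or.inl (List.mem_cons_of_mem _ h)
        · exact Or.inr ⟨w, by rw [List.getLast?_cons_cons]; exact hw, hp⟩

theorem getLast?_setLastFlag : ∀ (l : List E) (q : E), l.getLast? = some q →
    (setLastFlag l).getLast? = some (q.1, true)
  | [], q, h => by simp at h
  | [p], q, h => by
      simp only [List.getLast?_singleton, Option.some_inj] at h
      subst h; rfl
  | p :: p' :: r, q, h => by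
      rw [List.getLast?_cons_cons] at h
      have ih := getLast?_setLastFlag (p' :: r) q h
      rw [setLastFlag_cons_cons]
      have hne : setLastFlag (p' :: r) ≠ [] := by
        intro hc; rw [hc] at ih; simp at ih
      rw [show (p :: setLastFlag (p' :: r)) = [p] ++ setLastFlag (p' :: r) by rfl,
        List.getLast?_append_of_ne_nil _ hne]
      exact ih

theorem mem_of_getLast?' {l : List E} {q : E} (h : l.getLast? = some q) : q ∈ l := by
  rcases List.mem_getLast?_eq_getLast (by rw [h]; rfl : q ∈ l.getLast?) with ⟨hne, hq⟩
  exact hq ▸ List.getLast_mem hne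

theorem getLast_mem_setLastFlag (l : List E) (q : E) (h : l.getLast? = some q) :
    (q.1, true) ∈ setLastFlag l :=
  mem_of_getLast?' (getLast?_setLastFlag l q h)

theorem chain'_setLastFlag : ∀ (l : List E), List.IsChain Rel l → List.IsChain Rel (setLastFlag l)
  | [], _ => by simp [setLastFlag]
  | [p], _ => by simp [setLastFlag]
  | p :: q :: r, h => by
      rw [setLastFlag_cons_cons]
      rcases (List.isChain_cons_cons.mp h) with ⟨hpq, hrest⟩
      have ih := chain'_setLastFlag (q :: r) hrest
      cases r with
      | nil => exact List.isChain_cons_cons.mpr ⟨⟨hpq.1, hpq.2⟩, ih⟩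
      | cons q' r' =>
          rw [setLastFlag_cons_cons] at ih ⊢
          exact List.isChain_cons_cons.mpr ⟨hpq, ih⟩



/- generic takeWhile/dropWhile helpers -/
variable {α : Type}

theorem tw_append_neg (p : α → Bool) : ∀ (l : List α) (b : α) (l' : List α), p b = false →
    ((l ++ b :: l').takeWhile p) = l.takeWhile p
  | [], b, l', h => by simp [List.takeWhile_cons, h]
  | a :: l, b, l', h => by
      rw [List.cons_append, List.takeWhile_cons, List.takeWhile_cons]
      cases hpa : p a
      · simp
      · simp only [tw_append_neg p l b l' h]

theorem dw_append_neg (p : α → Bool) : ∀ (l : List α) (b : α) (l' : List α), p b = false →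
    ((l ++ b :: l').dropWhile p) = l.dropWhile p ++ b :: l'
  | [], b, l', h => by simp [List.dropWhile_cons, h]
  | a :: l, b, l', h => by
      rw [List.cons_append, List.dropWhile_cons, List.dropWhile_cons]
      cases hpa : p a
      · simp
      · simp only [dw_append_neg p l b l' h]; simp

theorem tw_append_pos (p : α → Bool) : ∀ (l l' : List α), (∀ x ∈ l, p x = true) →
    ((l ++ l').takeWhile p) = l ++ l'.takeWhile p
  | [], l', _ => by simp
  | a :: l, l', h => by
      rw [List.cons_append, List.takeWhile_cons, h a (List.mem_cons_self)]
      simp only [tw_append_pos p l l' (fun x hx => h x (List.mem_cons_of_mem _ hx))]; simp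

theorem dw_append_pos (p : α → Bool) : ∀ (l l' : List α), (∀ x ∈ l, p x = true) →
    ((l ++ l').dropWhile p) = l'.dropWhile p
  | [], l', _ => by simp
  | a :: l, l', h => by
      rw [List.cons_append, List.dropWhile_cons, h a (List.mem_cons_self)]
      simp only [dw_append_pos p l l' (fun x hx => h x (List.mem_cons_of_mem _ hx))]; simp

theorem head?_dropWhile_neg (p : α → Bool) : ∀ (l : List α) (q : α),
    (l.dropWhile p).head? = some q → p q = false
  | [], q, h => by simp at h
  | a :: l, q, h => by
      rw [List.dropWhile_cons] at h
      cases hpa : p a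
      · rw [hpa] at h; simp at h; rw [← h]; exact hpa
      · rw [hpa] at h; simp only [if_pos rfl] at h
        exact head?_dropWhile_neg p l q h

theorem pred_iff (c : ℕ+) (p : E) : (fun p : E => decide (p.1 < c)) p = true ↔ p.1 < c := by simp

theorem map_fst_ins (c : ℕ+) (L : List E) :
    ((ins c L).map Prod.fst).Perm (c :: L.map Prod.fst) := by
  unfold ins
  rw [List.map_append, map_fst_setLastFlag, List.map_cons]
  refine (List.perm_middle).trans ?_
  rw [← List.map_append, List.takeWhile_append_dropWhile]

theorem perm_IL : ∀ u : List ℕ+, ((IL u).map Prod.fst).Perm u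
  | [] => by simp [IL]
  | a :: u => by
      have : IL (a :: u) = ins a (IL u) := rfl
      rw [this]
      exact (map_fst_ins a (IL u)).trans (List.Perm.cons a (perm_IL u))

instance : IsTrans E Rel :=
  ⟨fun p q r hpq hqr => ⟨hpq.1.trans hqr.1, fun h => lt_of_lt_of_le (hpq.2 h) hqr.1⟩⟩

theorem inv_ins (c : ℕ+) (L : List E) (h : Inv L) : Inv (ins c L) := by
  obtain ⟨hch, hlast⟩ := h
  set pr : E → Bool := fun p => decide (p.1 < c) with hpr
  set P := L.takeWhile pr with hP
  set Q := L.dropWhile pr with hQ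
  have hPQ : P ++ Q = L := List.takeWhile_append_dropWhile (p := pr) (l := L)
  have hchPQ : List.IsChain Rel (P ++ Q) := by rw [hPQ]; exact hch
  obtain ⟨hchP, hchQ, _⟩ := List.isChain_append.mp hchPQ
  have hmemP : ∀ p ∈ P, p.1 < c := fun p hp => by
    have := List.mem_takeWhile_imp hp
    simp only [hpr, decide_eq_true_eq] at this
    exact this
  constructor
  · show List.IsChain Rel (setLastFlag P ++ (c, false) :: Q)
    rw [List.isChain_append]
    refine ⟨chain'_setLastFlag P hchP, ?_, ?_⟩
    · rw [List.isChain_cons]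
      refine ⟨fun y hy => ?_, hchQ⟩
      have : pr y = false := head?_dropWhile_neg pr L y hy
      have hcy : c ≤ y.1 := by
        by_contra hcon
        simp [hpr, lt_of_not_ge hcon] at this
      exact ⟨hcy, fun hf => by simp at hf⟩
    · intro x hx y hy
      simp only [List.head?_cons, Option.mem_def, Option.some_inj] at hy
      subst hy
      have hxm : x ∈ setLastFlag P := mem_of_getLast?' hx
      have : x.1 ∈ (setLastFlag P).map Prod.fst := List.mem_map_of_mem (f := Prod.fst) hxm
      rw [map_fst_setLastFlag] at this
      obtain ⟨p, hp, hfst⟩ := List.mem_map.mp this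
      have hlt : x.1 < c := hfst ▸ hmemP p hp
      exact ⟨le_of_lt hlt, fun _ => hlt⟩
  · intro p' hp'
    show p'.2 = false
    have hp2 : (setLastFlag P ++ (c, false) :: Q).getLast? = some p' := hp'
    rw [List.getLast?_append_of_ne_nil _ (List.cons_ne_nil _ _)] at hp2
    cases hQe : Q with
    | nil =>
        rw [hQe] at hp2
        simp only [List.getLast?_singleton, Option.some_inj] at hp2
        rw [← hp2]
    | cons y Q' =>
        rw [hQe, List.getLast?_cons_cons] at hp2
        apply hlast
        rw [← hPQ, hQe, List.getLast?_append_of_ne_nil _ (List.cons_ne_nil _ _)]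
        exact hp2

theorem inv_IL : ∀ u : List ℕ+, Inv (IL u)
  | [] => ⟨List.isChain_nil, fun p hp => by simp [IL] at hp⟩
  | a :: u => inv_ins a (IL u) (inv_IL u)

theorem pairwise_IL (u : List ℕ+) : List.Pairwise Rel (IL u) :=
  List.isChain_iff_pairwise.mp (inv_IL u).1


/- membership helpers -/

def fstle (p q : E) : Prop := p.1 ≤ q.1

theorem pairwise_fst_IL (u : List ℕ+) : List.Pairwise fstle (IL u) :=
  (pairwise_IL u).imp (fun h => h.1)

theorem fst_mem_of_mem {u : List ℕ+} {p : E} (h : p ∈ IL u) : p.1 ∈ u :=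
  (perm_IL u).mem_iff.mp (List.mem_map_of_mem (f := Prod.fst) h)

theorem exists_of_mem {u : List ℕ+} {a : ℕ+} (h : a ∈ u) : ∃ f, (a, f) ∈ IL u := by
  have := (perm_IL u).mem_iff.mpr h
  obtain ⟨p, hp, hfst⟩ := List.mem_map.mp this
  refine ⟨p.2, ?_⟩
  have : (a, p.2) = p := by
    ext
    · exact hfst.symm
    · rfl
  rwa [this]

theorem pnat_add_one_le {a c : ℕ+} (h : a < c) : a + 1 ≤ c := by
  rw [← PNat.coe_le_coe, PNat.add_coe, PNat.one_coe]
  rw [← PNat.coe_lt_coe] at h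
  omega

theorem tw_mem {c : ℕ+} : ∀ {L : List E}, List.Pairwise fstle L → ∀ {p : E}, p ∈ L → p.1 < c →
    p ∈ L.takeWhile (fun p : E => decide (p.1 < c))
  | [], _, _, hp, _ => by simp at hp
  | q :: L, hpw, p, hp, hlt => by
      rcases List.mem_cons.mp hp with h | h
      · subst h
        rw [List.takeWhile_cons, if_pos (by simpa using hlt)]
        exact List.mem_cons_self
      · have hq : q.1 ≤ p.1 := (List.pairwise_cons.mp hpw).1 p h
        rw [List.takeWhile_cons, if_pos (by simp; exact lt_of_le_of_lt hq hlt)]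
        exact List.mem_cons_of_mem _ (tw_mem (List.pairwise_cons.mp hpw).2 h hlt)

theorem gl_max : ∀ {P : List E}, List.Pairwise fstle P → ∀ {q : E}, P.getLast? = some q →
    ∀ r ∈ P, r.1 ≤ q.1
  | [], _, q, hq, _, _ => by simp at hq
  | [p], _, q, hq, r, hr => by
      simp only [List.getLast?_singleton, Option.some_inj] at hq
      simp only [List.mem_singleton] at hr
      subst hq; subst hr; exact le_refl _
  | p :: p' :: P, hpw, q, hq, r, hr => by
      rw [List.getLast?_cons_cons] at hq
      have hqm : q ∈ p' :: P := mem_of_getLast?' hq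
      rcases List.mem_cons.mp hr with h | h
      · subst h
        exact (List.pairwise_cons.mp hpw).1 q hqm
      · exact gl_max (List.pairwise_cons.mp hpw).2 hq r h

/-- If `(a, true)` is in `L` then it is in `ins c L`. -/
theorem mem_ins_of_mem {a c : ℕ+} {L : List E} (h : (a, true) ∈ L) : (a, true) ∈ ins c L := by
  rw [← List.takeWhile_append_dropWhile (p := fun p : E => decide (p.1 < c)) (l := L)] at h
  unfold ins
  rcases List.mem_append.mp h with h | h
  · exact List.mem_append_left _ (mem_setLastFlag_of _ _ h)
  · exact List.mem_append_right _ (List.mem_cons_of_mem _ h)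

/-- B2: if `[a+1, a]` is a sublist of `u`, then the infix-last `a`-node has a
non-empty right subtree. -/
theorem flag_of_sublist : ∀ (u : List ℕ+) (a : ℕ+),
    List.Sublist [a + 1, a] u → (a, true) ∈ IL u
  | [], a, h => by simp at h
  | c :: u, a, h => by
      cases h with
      | cons _ h' =>
          exact mem_ins_of_mem (flag_of_sublist u a h')
      | cons_cons _ h' =>
          -- c = a + 1, [a] <+ u
          have ha : a ∈ u := h'.subset (List.mem_singleton_self a)
          obtain ⟨f, hf⟩ := exists_of_mem ha
          have hpw := pairwise_fst_IL u
          have hmem : (a, f) ∈ (IL u).takeWhile (fun p : E => decide (p.1 < a + 1)) :=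
            tw_mem hpw hf (PNat.lt_add_right a 1)
          set P := (IL u).takeWhile (fun p : E => decide (p.1 < a + 1)) with hP
          have hne : P ≠ [] := List.ne_nil_of_mem hmem
          obtain ⟨q, hq⟩ : ∃ q, P.getLast? = some q :=
            ⟨P.getLast hne, List.getLast?_eq_getLast_of_ne_nil hne⟩
          have hq1 : q.1 = a := by
            have h1 : a ≤ q.1 := gl_max (hpw.sublist (List.takeWhile_sublist _)) hq (a, f) hmem
            have h2 : q.1 < a + 1 := by
              have := List.mem_takeWhile_imp (mem_of_getLast?' hq)
              simpa using this
            exact le_antisymm (by rwa [← PNat.lt_add_one_iff]) h1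
          have : (q.1, true) ∈ setLastFlag P := getLast_mem_setLastFlag P q hq
          rw [hq1] at this
          show (a, true) ∈ ins (a+1) (IL u)
          exact List.mem_append_left _ this

/-- B1: if the infix-last `a`-node has a flag and `a+1 ∈ u` then `[a+1,a]` is a
sublist of `u`. -/
theorem sublist_of_flag : ∀ (u : List ℕ+) (a : ℕ+),
    (a, true) ∈ IL u → a + 1 ∈ u → List.Sublist [a + 1, a] u
  | [], a, hm, _ => by simp [IL] at hm
  | c :: u, a, hm, hmem => by
      have hpw := pairwise_fst_IL u
      set pr : E → Bool := fun p => decide (p.1 < c) with hpr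
      set P := (IL u).takeWhile pr with hP
      set Q := (IL u).dropWhile pr with hQ
      -- common handler when (a, true) ∈ IL u
      have H1 : (a, true) ∈ IL u → List.Sublist [a + 1, a] (c :: u) := by
        intro h
        by_cases hc : c = a + 1
        · subst hc
          have : a ∈ u := fst_mem_of_mem h
          exact List.Sublist.cons₂ _ (List.singleton_sublist.mpr this)
        · have : a + 1 ∈ u := by
            rcases List.mem_cons.mp hmem with h' | h'
            · exact absurd h'.symm hc
            · exact h'
          exact List.Sublist.cons c (sublist_of_flag u a h this)
      have hm' : (a, true) ∈ setLastFlag P ++ (c, false) :: Q := hm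
      rcases List.mem_append.mp hm' with h | h
      · rcases mem_of_mem_setLastFlag P (a, true) h with h | ⟨q, hq, heq⟩
        · exact H1 ((List.takeWhile_sublist pr).subset h)
        · -- a = q.1, q is the last element of P
          have hqa : q.1 = a := by rw [Prod.ext_iff] at heq; exact heq.1.symm
          have hqP : q ∈ P := mem_of_getLast?' hq
          have hac : a < c := by
            have := List.mem_takeWhile_imp hqP
            simp only [hpr, decide_eq_true_eq] at this
            rwa [hqa] at this
          by_cases hc : c = a + 1
          · subst hc
            have : a ∈ u := by rw [← hqa]; exact fst_mem_of_mem ((List.takeWhile_sublist pr).subset hqP)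
            exact List.Sublist.cons₂ _ (List.singleton_sublist.mpr this)
          · exfalso
            have ha1u : a + 1 ∈ u := by
              rcases List.mem_cons.mp hmem with h' | h'
              · exact absurd h'.symm hc
              · exact h'
            obtain ⟨f, hf⟩ := exists_of_mem ha1u
            have ha1c : (a : ℕ+) + 1 < c := lt_of_le_of_ne (pnat_add_one_le hac) (fun he => hc he.symm)
            have hmemP : (a + 1, f) ∈ P := tw_mem hpw hf ha1c
            have := gl_max (hpw.sublist (List.takeWhile_sublist _)) hq (a + 1, f) hmemP
            rw [hqa] at this
            exact absurd this (not_le.mpr (PNat.lt_add_right a 1))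
      · rcases List.mem_cons.mp h with h | h
        · simp at h
        · exact H1 ((List.dropWhile_sublist pr).subset h)

/- The Good predicate: labels count earlier flags -/

def Good (L : List E) : Prop :=
  ∀ (t : ℕ) (h : t < L.length),
    (L.get ⟨t, h⟩).1 = ((L.take t).countP (fun p => p.2) + 1).toPNat'

theorem toPNat'_succ_coe (n : ℕ) : (((n + 1).toPNat' : ℕ+) : ℕ) = n + 1 := by
  rw [Nat.toPNat'_coe, if_pos (Nat.succ_pos n)]

theorem mono (u : List ℕ+) (s t : ℕ) (hs : s < (IL u).length) (ht : t < (IL u).length)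
    (hle : s ≤ t) : ((IL u).get ⟨s, hs⟩).1 ≤ ((IL u).get ⟨t, ht⟩).1 := by
  rcases eq_or_lt_of_le hle with h | h
  · subst h; exact le_refl _
  · exact (List.pairwise_iff_get.mp (pairwise_fst_IL u)) ⟨s, hs⟩ ⟨t, ht⟩ h

theorem good_flag {L : List E} (hG : Good L) :
    ∀ (t : ℕ), t ≤ L.length → ∀ j, j < (L.take t).countP (fun p => p.2) →
      ∃ (s : ℕ) (hs : s < L.length), L.get ⟨s, hs⟩ = ((j + 1).toPNat', true) := by
  intro t
  induction t with
  | zero => intro _ j hj; simp at hj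
  | succ t ih =>
      intro ht j hj
      have ht' : t < L.length := ht
      have htake : L.take (t + 1) = L.take t ++ [L.get ⟨t, ht'⟩] := by
        rw [List.take_succ]
        congr 1
        rw [List.getElem?_eq_getElem ht']
        rfl
      rw [htake, List.countP_append] at hj
      by_cases hlt : j < (L.take t).countP (fun p => p.2)
      · exact ih (le_of_lt ht') j hlt
      · have hflag : (L.get ⟨t, ht'⟩).2 = true := by
          by_contra hf
          rw [Bool.not_eq_true] at hf
          simp only [List.countP_cons, List.countP_nil, hf] at hj
          simp at hj
          omega
        have hcount : (L.take t).countP (fun p => p.2) = j := by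
          simp only [List.countP_cons, List.countP_nil, hflag] at hj
          simp at hj
          omega
        refine ⟨t, ht', ?_⟩
        have h1 := hG t ht'
        rw [hcount] at h1
        have : L.get ⟨t, ht'⟩ = ((L.get ⟨t, ht'⟩).1, (L.get ⟨t, ht'⟩).2) := rfl
        rw [this, h1, hflag]

theorem pnat_val_toPNat' (i : ℕ+) : ((i : ℕ)).toPNat' = i := by
  apply PNat.coe_injective
  rw [Nat.toPNat'_coe, if_pos i.pos]

/-- Good → highest weight -/
theorem hw_of_good (u : List ℕ+) (hG : Good (IL u)) :
    ∀ i : ℕ+, ¬ (¬ List.Sublist [i + 1, i] u ∧ (i + 1) ∈ u) := by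
  rintro i ⟨hns, hmem⟩
  obtain ⟨f, hf⟩ := exists_of_mem hmem
  obtain ⟨n, hn⟩ := List.mem_iff_get.mp hf
  have h1 := hG n.1 n.2
  have hfst : ((IL u).get n).1 = i + 1 := by rw [hn]
  have h2 : ((i : ℕ+) + 1 : ℕ+) = ((((IL u).take n.1).countP (fun p => p.2) + 1).toPNat') := by
    rw [← hfst]
    convert h1 using 2
  set c := ((IL u).take n.1).countP (fun p => p.2) with hc
  have hcv : (i : ℕ) = c := by
    have := congrArg (fun x : ℕ+ => (x : ℕ)) h2
    simp only [PNat.add_coe, PNat.one_coe, toPNat'_succ_coe] at this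
    omega
  have hcpos : 1 ≤ c := by rw [← hcv]; exact i.pos
  obtain ⟨s, hs, hgs⟩ := good_flag hG n.1 (le_of_lt n.2) (c - 1) (by omega)
  have : (IL u).get ⟨s, hs⟩ = (i, true) := by
    rw [hgs]
    congr 1
    rw [show c - 1 + 1 = c by omega, ← hcv, pnat_val_toPNat']
  have hmem2 : ((i : ℕ+), true) ∈ IL u := this ▸ List.get_mem _ _
  exact hns (sublist_of_flag u i hmem2 hmem)

/-- downward closure of the support for highest-weight words -/
theorem down_closed {u : List ℕ+} (hmd : ∀ a : ℕ+, a + 1 ∈ u → a ∈ u) :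
    ∀ (n : ℕ) (b : ℕ+), (b : ℕ) ≤ n → b ∈ u → ∀ a : ℕ+, a < b → a ∈ u := by
  intro n
  induction n with
  | zero => intro b hb; exact absurd (lt_of_lt_of_le b.pos hb) (lt_irrefl 0)
  | succ n ih =>
      intro b hb hbu a hab
      have hb2 : 2 ≤ (b : ℕ) := by
        have := a.pos
        rw [← PNat.coe_lt_coe] at hab
        omega
      set b' : ℕ+ := ⟨(b : ℕ) - 1, by omega⟩ with hb'
      have hbb : b' + 1 = b := by
        apply PNat.coe_injective
        rw [PNat.add_coe, PNat.one_coe]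
        simp [hb']
        omega
      have hb'u : b' ∈ u := hmd b' (by rw [hbb]; exact hbu)
      rcases eq_or_lt_of_le (show a ≤ b' by
        rw [← PNat.coe_le_coe]
        rw [← PNat.coe_lt_coe] at hab
        simp [hb']
        omega) with h | h
      · rw [h]; exact hb'u
      · exact ih b' (by simp [hb']; omega) hb'u a h

/-- highest weight → Good -/
theorem good_of_hw (u : List ℕ+)
    (hw : ∀ i : ℕ+, ¬ (¬ List.Sublist [i + 1, i] u ∧ (i + 1) ∈ u)) : Good (IL u) := by
  have hsub : ∀ a : ℕ+, a + 1 ∈ u → List.Sublist [a + 1, a] u := by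
    intro a ha
    by_contra hn
    exact hw a ⟨hn, ha⟩
  have hmd : ∀ a : ℕ+, a + 1 ∈ u → a ∈ u := fun a ha =>
    (hsub a ha).subset (by simp)
  have hdown : ∀ (b : ℕ+), b ∈ u → ∀ a : ℕ+, a < b → a ∈ u := fun b =>
    down_closed hmd (b : ℕ) b (le_refl _)
  -- key: any strictly smaller index has a strictly smaller-or-equal label, and
  -- any value below a value of u is in u
  intro t
  induction t with
  | zero =>
      intro h
      simp only [List.take_zero, List.countP_nil, Nat.zero_add]
      set m := ((IL u).get ⟨0, h⟩).1 with hm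
      have hmu : m ∈ u := fst_mem_of_mem (List.get_mem _ _)
      show m = (1 : ℕ).toPNat'
      by_contra hne
      have hm1 : m ≠ 1 := by
        intro hc; rw [hc] at hne; exact hne rfl
      have : (1 : ℕ+) < m := lt_of_le_of_ne m.one_le (fun hc => hm1 hc.symm)
      have h1u : (1 : ℕ+) ∈ u := hdown m hmu 1 this
      obtain ⟨f, hf⟩ := exists_of_mem h1u
      obtain ⟨n, hn⟩ := List.mem_iff_get.mp hf
      have hmono := mono u 0 n.1 h n.2 (Nat.zero_le _)
      rw [hn] at hmono
      have hmono' : m ≤ 1 := hmono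
      exact absurd (lt_of_lt_of_le this hmono') (lt_irrefl _)
  | succ t ih =>
      intro h
      have ht' : t < (IL u).length := Nat.lt_of_succ_lt h
      have iht := ih ht'
      set L := IL u with hL
      set a := (L.get ⟨t, ht'⟩).1 with ha
      set b := (L.get ⟨t + 1, h⟩).1 with hb
      set c := (L.take t).countP (fun p => p.2) with hc
      have hLlen : (IL u).length = L.length := rfl
      have htake : L.take (t + 1) = L.take t ++ [L.get ⟨t, ht'⟩] := by
        rw [List.take_succ]
        congr 1
        rw [List.getElem?_eq_getElem ht']
        rfl
      have hstep : Rel (L.get ⟨t, ht'⟩) (L.get ⟨t + 1, h⟩) := by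
        have := List.isChain_iff_getElem.mp (inv_IL u).1 t (by omega)
        exact this
      have hab : a ≤ b := hstep.1
      have ha1u : a < b → (a + 1 : ℕ+) ∈ u := by
        intro hlt
        have hbu : b ∈ u := fst_mem_of_mem (List.get_mem _ _)
        rcases eq_or_lt_of_le (pnat_add_one_le hlt) with he | hl
        · rw [he]; exact hbu
        · exact hdown b hbu (a + 1) hl
      have hjump : a < b → b = a + 1 := by
        intro hlt
        obtain ⟨f, hf⟩ := exists_of_mem (ha1u hlt)
        obtain ⟨n, hn⟩ := List.mem_iff_get.mp hf
        have hn1 : (L.get n).1 = a + 1 := by rw [hn]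
        have htn : t + 1 ≤ n.1 := by
          by_contra hcon
          push_neg at hcon
          have := mono u n.1 t n.2 ht' (by omega)
          rw [hn1] at this
          exact absurd (lt_of_lt_of_le (PNat.lt_add_right a 1) this) (lt_irrefl _)
        have hmono := mono u (t + 1) n.1 h n.2 htn
        rw [hn1] at hmono
        exact le_antisymm hmono (pnat_add_one_le hlt)
      cases hfl : (L.get ⟨t, ht'⟩).2 with
      | true =>
          have hlt : a < b := hstep.2 hfl
          have hba : b = a + 1 := hjump hlt
          have hcount : (L.take (t + 1)).countP (fun p => p.2) = c + 1 := by
            rw [htake, List.countP_append, List.countP_cons, List.countP_nil]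
            simp [show L[t].2 = true from hfl, hc]
          rw [hcount]
          show b = (c + 1 + 1).toPNat'
          apply PNat.coe_injective
          rw [toPNat'_succ_coe]
          have hav : (a : ℕ) = c + 1 := by
            rw [iht]
            exact toPNat'_succ_coe c
          rw [hba, PNat.add_coe, PNat.one_coe, hav]
      | false =>
          have hcount : (L.take (t + 1)).countP (fun p => p.2) = c := by
            rw [htake, List.countP_append, List.countP_cons, List.countP_nil]
            simp [show L[t].2 = false from hfl, hc]
          rw [hcount]
          show b = (c + 1).toPNat'
          rw [← iht]
          refine le_antisymm ?_ hab
          by_contra hcon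
          push_neg at hcon
          -- hcon : a < b
          have hsubl := hsub a (ha1u hcon)
          have hmem2 : ((a : ℕ+), true) ∈ IL u := flag_of_sublist u a hsubl
          obtain ⟨s', hgs⟩ := List.mem_iff_get.mp hmem2
          by_cases hs1 : s'.1 + 1 < L.length
          · have hstep2 : Rel (L.get ⟨s'.1, s'.2⟩) (L.get ⟨s'.1 + 1, hs1⟩) := by
              have := List.isChain_iff_getElem.mp (inv_IL u).1 s'.1 (by omega)
              exact this
            have hgs' : L.get ⟨s'.1, s'.2⟩ = (a, true) := by
              rw [← hgs]
            have hflag2 : (L.get ⟨s'.1, s'.2⟩).2 = true := by rw [hgs']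
            have hlab2 : (L.get ⟨s'.1, s'.2⟩).1 = a := by rw [hgs']
            have hgt : a < (L.get ⟨s'.1 + 1, hs1⟩).1 := by
              rw [← hlab2]; exact hstep2.2 hflag2
            rcases lt_trichotomy s'.1 t with hst | hst | hst
            · have := mono u (s'.1 + 1) t (by omega) ht' (by omega)
              rw [← ha] at this
              exact absurd (lt_of_lt_of_le hgt this) (lt_irrefl _)
            · have : (L.get ⟨t, ht'⟩).2 = true := by
                rw [show (⟨t, ht'⟩ : Fin L.length) = ⟨s'.1, s'.2⟩ by
                  apply Fin.ext; exact hst.symm]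
                exact hflag2
              rw [this] at hfl
              exact absurd hfl (by simp)
            · have := mono u (t + 1) s'.1 h s'.2 (by omega)
              rw [hlab2, ← hb] at this
              exact absurd (lt_of_lt_of_le hcon this) (lt_irrefl _)
          · have hlen : s'.1 = L.length - 1 := by omega
            have hne : L ≠ [] := List.ne_nil_of_length_pos (by omega)
            have hlast := List.getLast?_eq_getLast_of_ne_nil hne
            have hgl : L.getLast hne = L.get ⟨s'.1, s'.2⟩ := by
              rw [List.getLast_eq_getElem]
              simp only [List.get_eq_getElem, hlen]
            have := (inv_IL u).2 (L.getLast hne) hlast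
            rw [hgl, hgs] at this
            simp at this

end Sylv


namespace Sylv

open BT

theorem rIns_node (a x : ℕ+) (l r : BT ℕ+) :
    rIns a (node l x r) = if a ≤ x then node (rIns a l) x r else node l x (rIns a r) := rfl

theorem content_rIns : ∀ (t : BT ℕ+) (a : ℕ+), content (rIns a t) = a ::ₘ content t
  | leaf, a => by simp [rIns, content]
  | node l x r, a => by
      by_cases hax : a ≤ x
      · rw [show rIns a (node l x r) = node (rIns a l) x r by
          rw [rIns_node, if_pos hax]]
        simp [content, content_rIns l a]
        try rw [Multiset.cons_swap]
      · rw [show rIns a (node l x r) = node l x (rIns a r) by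
          rw [rIns_node, if_neg hax]]
        simp [content, content_rIns r a]
        try rw [Multiset.cons_swap]
        try (congr 1; rw [← Multiset.cons_add, ← Multiset.cons_add, Multiset.cons_swap])

theorem isRBST_rIns : ∀ (t : BT ℕ+) (a : ℕ+), IsRBST t → IsRBST (rIns a t)
  | leaf, a, _ => by
      show IsRBST (node leaf a leaf)
      exact ⟨by simp [content], by simp [content], trivial, trivial⟩
  | node l x r, a, h => by
      obtain ⟨h1, h2, h3, h4⟩ := h
      by_cases hax : a ≤ x
      · rw [show rIns a (node l x r) = node (rIns a l) x r by
          rw [rIns_node, if_pos hax]]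
        refine ⟨?_, h2, isRBST_rIns l a h3, h4⟩
        intro y hy
        rw [content_rIns] at hy
        rcases Multiset.mem_cons.mp hy with hy | hy
        · rw [hy]; exact hax
        · exact h1 y hy
      · rw [show rIns a (node l x r) = node l x (rIns a r) by
          rw [rIns_node, if_neg hax]]
        refine ⟨h1, ?_, h3, isRBST_rIns r a h4⟩
        intro y hy
        rw [content_rIns] at hy
        rcases Multiset.mem_cons.mp hy with hy | hy
        · rw [hy]; exact lt_of_not_ge hax
        · exact h2 y hy

theorem isRBST_Psylv : ∀ u : List ℕ+, IsRBST (Psylv u)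
  | [] => trivial
  | a :: u => isRBST_rIns (Psylv u) a (isRBST_Psylv u)

theorem mem_infix_content : ∀ (t : BT ℕ+) (p : E), p ∈ infixNodes t → p.1 ∈ content t
  | leaf, p, h => by simp [infixNodes] at h
  | node l x r, p, h => by
      unfold infixNodes at h
      show p.1 ∈ x ::ₘ (content l + content r)
      rcases List.mem_append.mp h with h | h
      · exact Multiset.mem_cons.mpr (Or.inr (Multiset.mem_add.mpr (Or.inl (mem_infix_content l p h))))
      · rcases List.mem_cons.mp h with h | h
        · rw [h]; exact Multiset.mem_cons_self _ _
        · exact Multiset.mem_cons.mpr (Or.inr (Multiset.mem_add.mpr (Or.inr (mem_infix_content r p h))))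

theorem rIns_ne_leaf : ∀ (t : BT ℕ+) (a : ℕ+), rIns a t ≠ leaf
  | leaf, a => by simp [rIns]
  | node l x r, a => by
      by_cases hax : a ≤ x
      · rw [show rIns a (node l x r) = node (rIns a l) x r by
          rw [rIns_node, if_pos hax]]
        simp
      · rw [show rIns a (node l x r) = node l x (rIns a r) by
          rw [rIns_node, if_neg hax]]
        simp

theorem infixNodes_ne_nil : ∀ (t : BT ℕ+), t ≠ leaf → infixNodes t ≠ []
  | leaf, h => absurd rfl h
  | node l x r, _ => by simp [infixNodes]

/-- The bridge: right strict leaf insertion acts on infix node lists as `ins`. -/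
theorem bridge : ∀ (t : BT ℕ+), IsRBST t → ∀ a : ℕ+,
    infixNodes (rIns a t) = ins a (infixNodes t)
  | leaf, _, a => by
      show infixNodes (node leaf a leaf) = _
      simp [infixNodes, ins, setLastFlag]
  | node l x r, h, a => by
      obtain ⟨h1, h2, h3, h4⟩ := h
      set f := decide (r ≠ leaf) with hfdef
      set pr : E → Bool := fun p => decide (p.1 < a) with hpr
      by_cases hax : a ≤ x
      · have hstep : rIns a (node l x r) = node (rIns a l) x r := by
          rw [rIns_node, if_pos hax]
        rw [hstep]
        show infixNodes (rIns a l) ++ (x, f) :: infixNodes r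
            = ins a (infixNodes l ++ (x, f) :: infixNodes r)
        have hprx : pr (x, f) = false := by
          simp only [hpr, decide_eq_false_iff_not, not_lt]
          exact hax
        unfold ins
        rw [tw_append_neg pr (infixNodes l) (x, f) (infixNodes r) hprx,
          dw_append_neg pr (infixNodes l) (x, f) (infixNodes r) hprx,
          bridge l h3 a]
        unfold ins
        simp [List.append_assoc, hpr]
      · have hxa : x < a := lt_of_not_ge hax
        have hstep : rIns a (node l x r) = node l x (rIns a r) := by
          rw [rIns_node, if_neg hax]
        rw [hstep]
        have hfr : decide (rIns a r ≠ leaf) = true := by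
          simp [rIns_ne_leaf r a]
        show infixNodes l ++ (x, decide (rIns a r ≠ leaf)) :: infixNodes (rIns a r)
            = ins a (infixNodes l ++ (x, f) :: infixNodes r)
        rw [hfr, bridge r h4 a]
        have hall : ∀ p ∈ infixNodes l, pr p = true := by
          intro p hp
          have : p.1 ≤ x := h1 p.1 (mem_infix_content l p hp)
          simp only [hpr, decide_eq_true_eq]
          exact lt_of_le_of_lt this hxa
        have hprx : pr (x, f) = true := by
          simp only [hpr, decide_eq_true_eq]; exact hxa
        unfold ins
        rw [tw_append_pos pr (infixNodes l) ((x, f) :: infixNodes r) hall,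
          dw_append_pos pr (infixNodes l) ((x, f) :: infixNodes r) hall,
          List.takeWhile_cons, if_pos hprx, List.dropWhile_cons, if_pos hprx]
        set TR := (infixNodes r).takeWhile pr with hTR
        have hsl : setLastFlag (infixNodes l ++ (x, f) :: TR)
            = infixNodes l ++ (x, true) :: setLastFlag TR := by
          rw [setLastFlag_append (infixNodes l) ((x, f) :: TR) (List.cons_ne_nil _ _)]
          congr 1
          cases hTRe : TR with
          | nil => simp [setLastFlag]
          | cons q R =>
              have hrne : infixNodes r ≠ [] := by
                intro hc
                rw [hTR, hc] at hTRe
                simp at hTRe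
              have hf : f = true := by
                simp only [hfdef, decide_eq_true_eq]
                intro hc
                exact hrne (by rw [hc]; rfl)
              rw [hf, setLastFlag_cons_cons]
        rw [hsl]
        simp [List.append_assoc, hpr]

theorem infixNodes_Psylv : ∀ u : List ℕ+, infixNodes (Psylv u) = IL u
  | [] => rfl
  | a :: u => by
      show infixNodes (rIns a (Psylv u)) = ins a (IL u)
      rw [bridge (Psylv u) (isRBST_Psylv u) a, infixNodes_Psylv u]

end Sylv

/-- A word `u` is highest-weight (no `ė i` is defined on it) iff in `Psylv u`
every node in the `a`-th right interval is labelled `a`; that is, each node's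
label equals one plus the number of earlier nodes (in infix order) having a
non-empty right subtree. -/
theorem highest_weight_iff_right_intervals (u : List ℕ+) :
    (∀ i : ℕ+, ¬ qeDef i u) ↔
      ∀ (t : ℕ) (h : t < (infixNodes (Psylv u)).length),
        ((infixNodes (Psylv u)).get ⟨t, h⟩).1 =
          (((infixNodes (Psylv u)).take t).countP (fun p => p.2) + 1).toPNat' := by
  rw [Sylv.infixNodes_Psylv u]
  constructor
  · intro hw
    exact Sylv.good_of_hw u (fun i => hw i)
  · intro hG i
    exact Sylv.hw_of_good u hG i
end
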